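/- arXiv:1904.09231 — 2 statements merged into one kernel-verified Lean document; each statement's English description precedes it below -/
import Mathlib

section
/- Fix a sequence s and a window size ρ. Let G be a strict, transitively closed episode and let e be a non-derivable proper skeleton edge of G. Then e is a non-derivable proper skeleton edge in G − f, for any proper skeleton edge f ≠ e of G, and e is a non-derivable proper skeleton edge in G − v, for any solitary node v of G. -/
open scoped Classical

/-- An episode: a finite directed acyclic graph with nodes drawn from `ℕ`,
labelled by symbols of an alphabet `α`. -/
structure Episode (α : Type*) where
  nodes : Finset ℕ
  edge : ℕ → ℕ → Prop
  lab : ℕ → α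
  edge_mem : ∀ ⦃x y : ℕ⦄, edge x y → x ∈ nodes ∧ y ∈ nodes

namespace Episode

variable {α : Type*}

/-- Transitively closed: whenever there is a directed path from `u` to `v`,
`(u,v)` is an edge. -/
def TransClosed (G : Episode α) : Prop :=
  ∀ ⦃u v : ℕ⦄, Relation.TransGen G.edge u v → G.edge u v

/-- Acyclic: no directed cycles. -/
def Acyclic (G : Episode α) : Prop := ∀ v : ℕ, ¬ Relation.TransGen G.edge v v

/-- Strict: any two distinct nodes sharing the same label are joined by a
directed path. -/
def Strict (G : Episode α) : Prop :=
  ∀ u ∈ G.nodes, ∀ v ∈ G.nodes, u ≠ v → G.lab u = G.lab v →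
    Relation.TransGen G.edge u v ∨ Relation.TransGen G.edge v u

/-- The class `𝒮` of strict, transitively closed (acyclic) episodes. -/
def inS (G : Episode α) : Prop := G.Acyclic ∧ G.TransClosed ∧ G.Strict

/-- A sequence `s` covers an episode `G`: there is an injective map from the
nodes of `G` to indices of `s` matching labels and respecting edges. -/
def Covers (s : List α) (G : Episode α) : Prop :=
  ∃ f : {v // v ∈ G.nodes} → Fin s.length,
    Function.Injective f ∧ (∀ v, s.get (f v) = G.lab v.1) ∧
      ∀ u v, G.edge u.1 v.1 → f u < f v

/-- `f` witnesses that `s` is an instance of `G`: a bijective valid mapping. -/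
def IsInstanceMap (s : List α) (G : Episode α)
    (f : {v // v ∈ G.nodes} → Fin s.length) : Prop :=
  Function.Bijective f ∧ (∀ v, s.get (f v) = G.lab v.1) ∧
    ∀ u v, G.edge u.1 v.1 → f u < f v

/-- The subgraph of `H` induced on a set `U` of nodes. -/
def restrict (H : Episode α) (U : Finset ℕ) : Episode α where
  nodes := U
  edge := fun x y => x ∈ U ∧ y ∈ U ∧ H.edge x y
  lab := H.lab
  edge_mem := by rintro x y ⟨h1, h2, -⟩; exact ⟨h1, h2⟩

/-- `G ⪯ H`: `G` is a subepisode of `H`.  There is a subgraph of `H` with as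
many nodes as `G` such that every sequence covering that subgraph covers `G`. -/
def Subep (G H : Episode α) : Prop :=
  ∃ U : Finset ℕ, U ⊆ H.nodes ∧ U.card = G.nodes.card ∧
    ∀ s : List α, Covers s (H.restrict U) → Covers s G

/-- `G ≺ H`: proper subepisode. -/
def ProperSubep (G H : Episode α) : Prop := Subep G H ∧ ¬ Subep H G

/-- `G ∼ H`: every sequence covers `G` iff it covers `H`. -/
def Equivalent (G H : Episode α) : Prop := ∀ s : List α, Covers s G ↔ Covers s H

/-- The nodes of `G` are `0, …, card − 1` listed in the canonical order:
labels increase, and nodes with equal labels are ordered by the edges. -/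
def CanonicallyIndexed [LinearOrder α] (G : Episode α) : Prop :=
  G.nodes = Finset.range G.nodes.card ∧
    ∀ u ∈ G.nodes, ∀ v ∈ G.nodes, u < v →
      G.lab u < G.lab v ∨ (G.lab u = G.lab v ∧ G.edge u v)

/-- An occurrence (instance) of `G` inside `s` whose span is smaller than the
window size `ρ`: an injective valid mapping with `max f − min f < ρ`. -/
def IsOcc (s : List α) (ρ : ℕ) (G : Episode α)
    (f : {v // v ∈ G.nodes} → Fin s.length) : Prop :=
  Function.Injective f ∧ (∀ v, s.get (f v) = G.lab v.1) ∧
    (∀ u v, G.edge u.1 v.1 → f u < f v) ∧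
    ∀ u v, (f u : ℕ) < (f v : ℕ) + ρ

/-- `G` occurs in `s` within some window of length at most `ρ`. -/
def Occurs (s : List α) (ρ : ℕ) (G : Episode α) : Prop := ∃ f, IsOcc s ρ G f

/-- The symbol `x` occurs in `s` inside the interval `[min f, max f]` of an
occurrence `f`. -/
def SymInWindow (s : List α) {G : Episode α}
    (f : {v // v ∈ G.nodes} → Fin s.length) (x : α) : Prop :=
  ∃ i : Fin s.length, s.get i = x ∧ (∃ u, f u ≤ i) ∧ ∃ v, i ≤ f v

/-- The node closure `cl_N`: augment `G` with one new isolated node labelled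
`x` for each symbol `x` of `s`, not labelling a node of `G`, that occurs inside
the interval of every occurrence of `G` (with span `< ρ`). -/
noncomputable def clN [LinearOrder α] (s : List α) (ρ : ℕ) (G : Episode α) :
    Episode α :=
  let newLabs : List α := (s.toFinset.filter
      (fun x => (∀ f, IsOcc s ρ G f → SymInWindow s f x) ∧
        ∀ v ∈ G.nodes, G.lab v ≠ x)).sort (· ≤ ·)
  let base : ℕ := G.nodes.sup id + 1
  { nodes := G.nodes ∪ (Finset.range newLabs.length).image (fun i => base + i)
    edge := G.edge
    lab := fun v =>
      if h : base ≤ v ∧ v - base < newLabs.length ∧ v ∉ G.nodes then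
        newLabs.get ⟨v - base, h.2.1⟩
      else G.lab v
    edge_mem := by
      intro x y h
      exact ⟨Finset.mem_union_left _ (G.edge_mem h).1,
        Finset.mem_union_left _ (G.edge_mem h).2⟩ }

/-- The edge closure `cl_E`: the maximal episode covered by all instances of
`G` in `s` with span `< ρ`; it has an edge `(x,y)` whenever the (unique) valid
mapping of every such instance places `x` before `y`. -/
def clE (s : List α) (ρ : ℕ) (G : Episode α) : Episode α where
  nodes := G.nodes
  edge := fun x y => ∃ (hx : x ∈ G.nodes) (hy : y ∈ G.nodes),
    ∀ f, IsOcc s ρ G f → f ⟨x, hx⟩ < f ⟨y, hy⟩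
  lab := G.lab
  edge_mem := by rintro x y ⟨hx, hy, -⟩; exact ⟨hx, hy⟩

/-- The `i`-closure `icl(G) = cl_E(cl_N(G))`. -/
noncomputable def icl [LinearOrder α] (s : List α) (ρ : ℕ) (G : Episode α) :
    Episode α :=
  clE s ρ (clN s ρ G)

/-- The window `s[a, b]` (0-based, inclusive endpoints). -/
def window (s : List α) (a b : ℕ) : List α := (s.take (b + 1)).drop a

/-- `s[a,b]` is a minimal window of `G` in `s`: it covers `G` and no proper
subwindow of it covers `G`. -/
def IsMinimalWindow (s : List α) (G : Episode α) (a b : ℕ) : Prop :=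
  a ≤ b ∧ b < s.length ∧ Covers (window s a b) G ∧
    ∀ a' b', a ≤ a' → b' ≤ b → a' ≤ b' → (a', b') ≠ (a, b) →
      ¬ Covers (window s a' b') G

/-- Fixed-window frequency: the number of windows of length `ρ` (indexed by
their right endpoints, windows may stick out of the sequence) covering `G`. -/
noncomputable def freqF (s : List α) (ρ : ℕ) (G : Episode α) : ℕ :=
  ((Finset.range (s.length + ρ - 1)).filter
    (fun b => Covers (window s (b + 1 - ρ) b) G)).card

/-- Disjoint-window frequency: the maximal number of pairwise disjoint
intervals of length at most `ρ` whose windows cover `G`. -/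
noncomputable def freqD (s : List α) (ρ : ℕ) (G : Episode α) : ℕ :=
  sSup {n : ℕ | ∃ I : Fin n → ℕ × ℕ,
    (∀ i, (I i).1 ≤ (I i).2 ∧ (I i).2 < (I i).1 + ρ ∧ (I i).2 < s.length ∧
      Covers (window s (I i).1 (I i).2) G) ∧
    ∀ i j, i ≠ j → (I i).2 < (I j).1 ∨ (I j).2 < (I i).1}

/-- `G` is f-closed w.r.t. the fixed-window frequency. -/
noncomputable def FClosedF (s : List α) (ρ : ℕ) (G : Episode α) : Prop :=
  ¬ ∃ H : Episode α, inS H ∧ ProperSubep G H ∧ freqF s ρ H = freqF s ρ G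

/-- `G` is f-closed w.r.t. the disjoint-window frequency. -/
noncomputable def FClosedD (s : List α) (ρ : ℕ) (G : Episode α) : Prop :=
  ¬ ∃ H : Episode α, inS H ∧ ProperSubep G H ∧ freqD s ρ H = freqD s ρ G

/-- `G − e`: remove an edge. -/
def eraseEdge (G : Episode α) (e : ℕ × ℕ) : Episode α where
  nodes := G.nodes
  edge := fun x y => G.edge x y ∧ (x, y) ≠ e
  lab := G.lab
  edge_mem := by rintro x y ⟨h, -⟩; exact G.edge_mem h

/-- `G − v`: remove a node together with all incident edges. -/
def eraseNode (G : Episode α) (w : ℕ) : Episode α where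
  nodes := G.nodes.erase w
  edge := fun x y => G.edge x y ∧ x ≠ w ∧ y ≠ w
  lab := G.lab
  edge_mem := by
    rintro x y ⟨h, hx, hy⟩
    exact ⟨Finset.mem_erase.mpr ⟨hx, (G.edge_mem h).1⟩,
      Finset.mem_erase.mpr ⟨hy, (G.edge_mem h).2⟩⟩

/-- `G + e`: add an edge. -/
def addEdge (G : Episode α) (e : ℕ × ℕ) : Episode α where
  nodes := G.nodes ∪ {e.1, e.2}
  edge := fun x y => G.edge x y ∨ (x, y) = e
  lab := G.lab
  edge_mem := by
    rintro x y (h | h)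
    · exact ⟨Finset.mem_union_left _ (G.edge_mem h).1,
        Finset.mem_union_left _ (G.edge_mem h).2⟩
    · cases h
      exact ⟨Finset.mem_union_right _ (by simp), Finset.mem_union_right _ (by simp)⟩

/-- A skeleton edge: an edge `(v,w)` such that there is no two-step path
`v → u → w`. -/
def IsSkeletonEdge (G : Episode α) (e : ℕ × ℕ) : Prop :=
  G.edge e.1 e.2 ∧ ¬ ∃ u, G.edge e.1 u ∧ G.edge u e.2

/-- A proper skeleton edge: a skeleton edge whose endpoints carry different
labels. -/
def IsProperSkeletonEdge (G : Episode α) (e : ℕ × ℕ) : Prop :=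
  IsSkeletonEdge G e ∧ G.lab e.1 ≠ G.lab e.2

/-- The set of edges of `G`, as a set of pairs. -/
def edgeSet (G : Episode α) : Set (ℕ × ℕ) := {p | G.edge p.1 p.2}

/-- Lexicographic order on edges (using the canonical order of the nodes). -/
def edgeLT (e f : ℕ × ℕ) : Prop := e.1 < f.1 ∨ (e.1 = f.1 ∧ e.2 < f.2)

/-- `e` is the last (lexicographically largest) proper skeleton edge of `G`. -/
def IsLastEdge (G : Episode α) (e : ℕ × ℕ) : Prop :=
  IsProperSkeletonEdge G e ∧
    ∀ f, IsProperSkeletonEdge G f → f = e ∨ edgeLT f e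

/-- A solitary node: a node with no incident edges. -/
def Solitary (G : Episode α) (v : ℕ) : Prop :=
  v ∈ G.nodes ∧ ∀ u, ¬ G.edge u v ∧ ¬ G.edge v u

/-- A source node: a node with no incoming edges. -/
def IsSource (G : Episode α) (v : ℕ) : Prop := v ∈ G.nodes ∧ ∀ u, ¬ G.edge u v

/-- A proper skeleton edge `e` of `G` is derivable if `G ⪯ icl(G − e)`. -/
noncomputable def DerivableEdge [LinearOrder α] (s : List α) (ρ : ℕ)
    (G : Episode α) (e : ℕ × ℕ) : Prop :=
  IsProperSkeletonEdge G e ∧ Subep G (icl s ρ (G.eraseEdge e))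

/-- A solitary node `v` of `G` is derivable if `G ⪯ icl(G − v)`. -/
noncomputable def DerivableNode [LinearOrder α] (s : List α) (ρ : ℕ)
    (G : Episode α) (v : ℕ) : Prop :=
  Solitary G v ∧ Subep G (icl s ρ (G.eraseNode v))

/-- `GreedyFrom s t G f`: `f` is the greedy mapping of `G` in the suffix of `s`
starting at (0-based) position `t`, recording absolute indices of `s`:
repeatedly map the source node of `G` whose label has the earliest remaining
occurrence to that position, and recurse on the episode with that node
removed and the part of the sequence after that position. -/
inductive GreedyFrom (s : List α) : ℕ → Episode α → (ℕ → ℕ) → Prop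
  | empty (t : ℕ) (G : Episode α) (f : ℕ → ℕ) (hG : G.nodes = ∅) :
      GreedyFrom s t G f
  | step (t : ℕ) (G : Episode α) (f : ℕ → ℕ) (v k : ℕ)
      (hv : G.IsSource v) (ht : t ≤ k) (hk : k < s.length)
      (hlab : s.get ⟨k, hk⟩ = G.lab v)
      (hmin : ∀ j (hj : j < s.length), t ≤ j → j < k →
        ¬ ∃ w, G.IsSource w ∧ s.get ⟨j, hj⟩ = G.lab w)
      (hfv : f v = k)
      (hrec : GreedyFrom s (k + 1) (G.eraseNode v) f) :
      GreedyFrom s t G f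

/-- One step of removing a derivable proper skeleton edge or a derivable
solitary node. -/
noncomputable def RemStep [LinearOrder α] (s : List α) (ρ : ℕ) :
    Episode α → Episode α → Prop := fun G G' =>
  (∃ e, DerivableEdge s ρ G e ∧ G' = G.eraseEdge e) ∨
  (∃ v, DerivableNode s ρ G v ∧ G' = G.eraseNode v)

end Episode

lemma below_card_inj {n : ℕ} (P : Finset (Fin n)) {a b : Fin n} (ha : a ∈ P) (hb : b ∈ P)
    (h : (P.filter (fun x => x < a)).card = (P.filter (fun x => x < b)).card) : a = b := by
  have gen : ∀ a b : Fin n, a ∈ P → b ∈ P → a < b →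
      (P.filter (fun x => x < a)).card < (P.filter (fun x => x < b)).card := by
    intro a b ha hb hab
    apply Finset.card_lt_card
    refine (Finset.ssubset_iff_of_subset ?_).2 ?_
    · intro x hx
      rw [Finset.mem_filter] at hx ⊢
      exact ⟨hx.1, lt_trans hx.2 hab⟩
    · exact ⟨a, Finset.mem_filter.2 ⟨ha, hab⟩, by simp⟩
  rcases lt_trichotomy a b with hab | hab | hab
  · exact absurd h (Nat.ne_of_lt (gen a b ha hb hab))
  · exact hab
  · exact absurd h.symm (Nat.ne_of_lt (gen b a hb ha hab))

lemma mono_bij_eq {n : ℕ} (T : Finset ℕ) (r : ℕ → ℕ → Prop)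
    (htot : ∀ u ∈ T, ∀ w ∈ T, u ≠ w → r u w ∨ r w u)
    (φ ψ : ℕ → Fin n)
    (hφi : Set.InjOn φ T) (hψi : Set.InjOn ψ T)
    (hφm : ∀ u ∈ T, ∀ w ∈ T, r u w → φ u < φ w)
    (hψm : ∀ u ∈ T, ∀ w ∈ T, r u w → ψ u < ψ w)
    (himg : T.image φ = T.image ψ) :
    ∀ u ∈ T, φ u = ψ u := by
  intro u hu
  have main : ∀ χ : ℕ → Fin n, Set.InjOn χ T →
      (∀ u ∈ T, ∀ w ∈ T, r u w → χ u < χ w) →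
      ((T.image χ).filter (fun x => x < χ u)).card = (T.filter (fun w => r w u)).card := by
    intro χ hi hm
    have hfe : (T.image χ).filter (fun x => x < χ u) = (T.filter (fun w => r w u)).image χ := by
      ext p
      simp only [Finset.mem_filter, Finset.mem_image]
      constructor
      · rintro ⟨⟨w, hw, rfl⟩, hlt⟩
        refine ⟨w, ⟨hw, ?_⟩, rfl⟩
        have hne : w ≠ u := by rintro rfl; exact lt_irrefl _ hlt
        rcases htot w hw u hu hne with h1 | h1
        · exact h1
        · exact absurd (lt_trans hlt (hm u hu w hw h1)) (lt_irrefl _)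
      · rintro ⟨w, ⟨hw, hr⟩, rfl⟩
        exact ⟨⟨w, hw, rfl⟩, hm w hw u hu hr⟩
    rw [hfe, Finset.card_image_of_injOn (hi.mono ?_)]
    intro x hx
    simp only [Finset.coe_filter, Set.mem_setOf_eq] at hx
    exact hx.1
  have h1 := main φ hφi hφm
  have h2 := main ψ hψi hψm
  rw [himg] at h1
  exact below_card_inj (T.image ψ) (himg ▸ Finset.mem_image_of_mem φ hu)
    (Finset.mem_image_of_mem ψ hu) (h1.trans h2.symm)
open Episode

section Aux
variable {α : Type*} [LinearOrder α]

noncomputable def filt (s : List α) (ρ : ℕ) (A : Episode α) : Finset α :=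
  s.toFinset.filter
    (fun x => (∀ f, IsOcc s ρ A f → SymInWindow s f x) ∧ ∀ v ∈ A.nodes, A.lab v ≠ x)

noncomputable def labsL (s : List α) (ρ : ℕ) (A : Episode α) : List α :=
  (filt s ρ A).sort (· ≤ ·)

def bse (A : Episode α) : ℕ := A.nodes.sup id + 1

omit [LinearOrder α] in
lemma bse_not_mem (A : Episode α) (i : ℕ) : bse A + i ∉ A.nodes := by
  intro h
  have := Finset.le_sup (f := id) h
  simp only [id] at this
  simp only [bse] at this
  omega

lemma clN_nodes (s : List α) (ρ : ℕ) (A : Episode α) :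
    (clN s ρ A).nodes
      = A.nodes ∪ (Finset.range (labsL s ρ A).length).image (fun i => bse A + i) := rfl

lemma clN_edge (s : List α) (ρ : ℕ) (A : Episode α) : (clN s ρ A).edge = A.edge := rfl

lemma clN_lab_mem (s : List α) (ρ : ℕ) (A : Episode α) {u : ℕ} (hu : u ∈ A.nodes) :
    (clN s ρ A).lab u = A.lab u := by
  show dite _ _ _ = _
  rw [dif_neg]
  simp [hu]

lemma clN_lab_new (s : List α) (ρ : ℕ) (A : Episode α) (i : ℕ)
    (hi : i < (labsL s ρ A).length) :
    (clN s ρ A).lab (bse A + i) = (labsL s ρ A).get ⟨i, hi⟩ := by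
  show dite _ _ _ = _
  rw [dif_pos]
  · congr 1
    simp [bse]
    rfl
  · refine ⟨Nat.le_add_right _ _, ?_, bse_not_mem A i⟩
    show bse A + i - (A.nodes.sup id + 1) < _
    have h2 : bse A + i - (A.nodes.sup id + 1) = i := by simp [bse]
    rw [h2]
    exact hi

/-- Characterization of new nodes of `clN`. -/
lemma clN_new_node (s : List α) (ρ : ℕ) (A : Episode α) {u : ℕ}
    (hu : u ∈ (clN s ρ A).nodes) (hu' : u ∉ A.nodes) :
    ∃ i : ℕ, ∃ hi : i < (labsL s ρ A).length, u = bse A + i ∧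
      (clN s ρ A).lab u = (labsL s ρ A).get ⟨i, hi⟩ ∧
      (clN s ρ A).lab u ∈ filt s ρ A := by
  rw [clN_nodes, Finset.mem_union] at hu
  rcases hu with hu | hu
  · exact absurd hu hu'
  · rw [Finset.mem_image] at hu
    obtain ⟨i, hi, rfl⟩ := hu
    rw [Finset.mem_range] at hi
    refine ⟨i, hi, rfl, clN_lab_new s ρ A i hi, ?_⟩
    rw [clN_lab_new s ρ A i hi]
    rw [← Finset.mem_sort (α := α) (· ≤ ·)]
    exact List.get_mem _ _

/-- Distinct new nodes of `clN` have distinct labels. -/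
lemma clN_new_inj (s : List α) (ρ : ℕ) (A : Episode α) {u w : ℕ}
    (hu : u ∈ (clN s ρ A).nodes) (hw : w ∈ (clN s ρ A).nodes)
    (hu' : u ∉ A.nodes) (hw' : w ∉ A.nodes)
    (hl : (clN s ρ A).lab u = (clN s ρ A).lab w) : u = w := by
  obtain ⟨i, hi, rfl, hlu, -⟩ := clN_new_node s ρ A hu hu'
  obtain ⟨j, hj, rfl, hlw, -⟩ := clN_new_node s ρ A hw hw'
  rw [hlu, hlw] at hl
  have hnd : (labsL s ρ A).Nodup := Finset.sort_nodup _ _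
  have := (List.Nodup.get_inj_iff hnd).1 hl
  simp only [Fin.mk.injEq] at this
  omega

end Aux

section Phi
variable {α : Type*} [LinearOrder α]

lemma symwin_transfer {s : List α} {B A : Episode α} (hsub : B.nodes ⊆ A.nodes)
    {g : {v // v ∈ A.nodes} → Fin s.length} {x : α}
    (h : SymInWindow s (fun v : {v // v ∈ B.nodes} => g ⟨v.1, hsub v.2⟩) x) :
    SymInWindow s g x := by
  obtain ⟨i, hi, ⟨u, hu⟩, ⟨w, hw⟩⟩ := h
  exact ⟨i, hi, ⟨⟨u.1, hsub u.2⟩, hu⟩, ⟨⟨w.1, hsub w.2⟩, hw⟩⟩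

lemma occ_transfer {s : List α} {ρ : ℕ} {B A : Episode α} (hsub : B.nodes ⊆ A.nodes)
    (hlab : ∀ v ∈ B.nodes, B.lab v = A.lab v)
    (hedge : ∀ u w, B.edge u w → A.edge u w)
    {g : {v // v ∈ A.nodes} → Fin s.length} (hg : IsOcc s ρ A g) :
    IsOcc s ρ B (fun v : {v // v ∈ B.nodes} => g ⟨v.1, hsub v.2⟩) := by
  obtain ⟨hinj, hlabg, hmono, hspan⟩ := hg
  refine ⟨?_, ?_, ?_, ?_⟩
  · intro u w h
    have := hinj h
    rw [Subtype.mk.injEq] at this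
    exact Subtype.ext this
  · intro v
    rw [hlabg ⟨v.1, hsub v.2⟩]
    exact (hlab v.1 v.2).symm
  · intro u w h
    exact hmono _ _ (hedge u.1 w.1 h)
  · intro u w
    exact hspan _ _

lemma filt_transfer {s : List α} {ρ : ℕ} {B A : Episode α} (hsub : B.nodes ⊆ A.nodes)
    (hlab : ∀ v ∈ B.nodes, B.lab v = A.lab v)
    (hedge : ∀ u w, B.edge u w → A.edge u w)
    {x : α} (hx : x ∈ filt s ρ B)
    (hno : ∀ u ∈ A.nodes, u ∉ B.nodes → A.lab u ≠ x) :
    x ∈ filt s ρ A := by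
  rw [filt, Finset.mem_filter] at hx
  obtain ⟨hxs, hwin, hlabs⟩ := hx
  refine Finset.mem_filter.2 ⟨hxs, ?_, ?_⟩
  · intro g hg
    exact symwin_transfer hsub (hwin _ (occ_transfer hsub hlab hedge hg))
  · intro v hv
    by_cases hvB : v ∈ B.nodes
    · rw [← hlab v hvB]
      exact hlabs v hvB
    · exact hno v hv hvB

lemma phi_exists (s : List α) (ρ : ℕ) (G H : Episode α) (e : ℕ × ℕ)
    (hlab : H.lab = G.lab)
    (hsub : H.nodes ⊆ G.nodes)
    (hBA : ∀ u w, (H.eraseEdge e).edge u w → (G.eraseEdge e).edge u w) :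
    ∃ φ0 : ℕ → ℕ, ∀ u ∈ (clN s ρ (H.eraseEdge e)).nodes,
      φ0 u ∈ (clN s ρ (G.eraseEdge e)).nodes ∧
      (clN s ρ (G.eraseEdge e)).lab (φ0 u) = (clN s ρ (H.eraseEdge e)).lab u ∧
      (φ0 u ∈ H.nodes ↔ u ∈ H.nodes) ∧
      (u ∈ H.nodes → φ0 u = u) := by
  classical
  set B := H.eraseEdge e with hB
  set A := G.eraseEdge e with hA
  have hsub' : B.nodes ⊆ A.nodes := hsub
  have hlab' : ∀ v ∈ B.nodes, B.lab v = A.lab v := by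
    intro v _
    show H.lab v = G.lab v
    rw [hlab]
  refine ⟨fun u => if u ∈ H.nodes then u
    else (if h : ∃ u', u' ∈ G.nodes ∧ u' ∉ H.nodes ∧ G.lab u' = (clN s ρ B).lab u
      then h.choose
      else bse A + (labsL s ρ A).idxOf ((clN s ρ B).lab u)), ?_⟩
  intro u hu
  dsimp only
  by_cases huH : u ∈ H.nodes
  · rw [if_pos huH]
    have huG : u ∈ G.nodes := hsub huH
    refine ⟨Finset.mem_union_left _ huG, ?_, by simp [huH], fun _ => rfl⟩
    rw [clN_lab_mem s ρ A huG, clN_lab_mem s ρ B huH]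
    exact (hlab' u huH).symm
  · rw [if_neg huH]
    obtain ⟨i, hi, hrep, hlu, hfiltB⟩ := clN_new_node s ρ B hu huH
    by_cases h : ∃ u', u' ∈ G.nodes ∧ u' ∉ H.nodes ∧ G.lab u' = (clN s ρ B).lab u
    · rw [dif_pos h]
      obtain ⟨h1, h2, h3⟩ := h.choose_spec
      refine ⟨Finset.mem_union_left _ h1, ?_, by simp [huH, h2], fun hc => absurd hc huH⟩
      rw [clN_lab_mem s ρ A h1]
      exact h3
    · rw [dif_neg h]
      have hfiltA : (clN s ρ B).lab u ∈ filt s ρ A := by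
        refine filt_transfer hsub' hlab' hBA hfiltB ?_
        intro u' hu' hu'B hlu'
        exact h ⟨u', hu', hu'B, hlu'⟩
      have hmemL : (clN s ρ B).lab u ∈ labsL s ρ A := by
        rw [labsL, Finset.mem_sort]
        exact hfiltA
      have hjlt : (labsL s ρ A).idxOf ((clN s ρ B).lab u) < (labsL s ρ A).length :=
        List.idxOf_lt_length_iff.2 hmemL
      refine ⟨?_, ?_, ?_, fun hc => absurd hc huH⟩
      · rw [clN_nodes]
        exact Finset.mem_union_right _
          (Finset.mem_image.2 ⟨_, Finset.mem_range.2 hjlt, rfl⟩)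
      · rw [clN_lab_new s ρ A _ hjlt]
        exact List.idxOf_get hjlt
      · constructor
        · intro hc
          exact absurd (hsub hc) (bse_not_mem A _)
        · intro hc
          exact absurd hc huH

end Phi

section KeyOcc
variable {α : Type*} [LinearOrder α]

theorem key_occ (s : List α) (ρ : ℕ) (G H : Episode α) (e : ℕ × ℕ)
    (hGne : G.lab e.1 ≠ G.lab e.2)
    (he1G : e.1 ∈ G.nodes) (he2G : e.2 ∈ G.nodes)
    (hlab : H.lab = G.lab)
    (hsub : H.nodes ⊆ G.nodes)
    (hHe : H.edge e.1 e.2)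
    (hHG : ∀ u w, H.edge u w → G.edge u w)
    (hkeep : ∀ u ∈ G.nodes, (G.lab u = G.lab e.1 ∨ G.lab u = G.lab e.2) → u ∈ H.nodes)
    (htot : ∀ u ∈ H.nodes, ∀ w ∈ H.nodes, u ≠ w → G.lab u = G.lab w →
      H.edge u w ∨ H.edge w u)
    (hBA : ∀ u w, (H.eraseEdge e).edge u w → (G.eraseEdge e).edge u w)
    (hsubep : Episode.Subep H (Episode.icl s ρ (H.eraseEdge e)))
    (g : {v // v ∈ (clN s ρ (G.eraseEdge e)).nodes} → Fin s.length)
    (hg : IsOcc s ρ (clN s ρ (G.eraseEdge e)) g)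
    (h1 : e.1 ∈ (clN s ρ (G.eraseEdge e)).nodes)
    (h2 : e.2 ∈ (clN s ρ (G.eraseEdge e)).nodes) :
    g ⟨e.1, h1⟩ < g ⟨e.2, h2⟩ := by
  classical
  obtain ⟨U, hUsub, hUcard, hUcov⟩ := hsubep
  obtain ⟨φ0, hφ0⟩ := phi_exists s ρ G H e hlab hsub hBA
  obtain ⟨hginj, hglab, hgmono, hgspan⟩ := hg
  have he1H : e.1 ∈ H.nodes := hkeep e.1 he1G (Or.inl rfl)
  have he2H : e.2 ∈ H.nodes := hkeep e.2 he2G (Or.inr rfl)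
  -- the order isomorphism with the image of g
  set img : Finset (Fin s.length) := Finset.univ.image g with himg_def
  have himg : ∀ v, g v ∈ img := fun v => Finset.mem_image_of_mem g (Finset.mem_univ v)
  set n := img.card with hn_def
  set oi : Fin n ≃o {x // x ∈ img} := img.orderIsoOfFin rfl with hoi_def
  set rank : {v // v ∈ (clN s ρ (G.eraseEdge e)).nodes} → Fin n :=
    fun v => oi.symm ⟨g v, himg v⟩ with hrank_def
  have hrank_lt : ∀ u v, rank u < rank v ↔ g u < g v := by
    intro u v
    show oi.symm _ < oi.symm _ ↔ _
    rw [OrderIso.lt_iff_lt]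
    exact Iff.rfl
  have hrank_inj : Function.Injective rank := by
    intro u v h
    have := oi.symm.injective h
    rw [Subtype.mk.injEq] at this
    exact hginj this
  have hoi_rank : ∀ v, (oi (rank v)).1 = g v := by
    intro v
    show (oi (oi.symm _)).1 = _
    rw [OrderIso.apply_symm_apply]
  have hrank_surj : ∀ i : Fin n, ∃ v, rank v = i := by
    intro i
    have hmem : (oi i).1 ∈ img := (oi i).2
    obtain ⟨v, -, hv⟩ := Finset.mem_image.1 hmem
    refine ⟨v, ?_⟩
    show oi.symm _ = i
    have : (⟨g v, himg v⟩ : {x // x ∈ img}) = oi i := Subtype.ext hv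
    rw [this, OrderIso.symm_apply_apply]
  -- the induced sequence
  set F : Fin n → α := fun i => s.get (oi i).1 with hF_def
  set s' : List α := List.ofFn F with hs'_def
  have hlen : s'.length = n := List.length_ofFn (f := F)
  set ci : Fin n → Fin s'.length := fun i => ⟨i.1, by rw [hlen]; exact i.2⟩ with hci_def
  have hget : ∀ j : Fin s'.length, s'.get j = s.get (oi ⟨j.1, by rw [← hlen]; exact j.2⟩).1 := by
    intro j
    have hjl : j.1 < (List.ofFn F).length := j.2
    have h0 : s'.get j = (List.ofFn F)[j.1] := rfl
    rw [h0, List.getElem_ofFn]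
  have hci_get : ∀ i, s'.get (ci i) = s.get (oi i).1 := by
    intro i
    rw [hget (ci i)]
  -- the label-preserving injection between the closures
  set φn : {v // v ∈ (clN s ρ (H.eraseEdge e)).nodes} →
      {v // v ∈ (clN s ρ (G.eraseEdge e)).nodes} :=
    fun v => ⟨φ0 v.1, (hφ0 v.1 v.2).1⟩ with hφn_def
  have hφn_lab : ∀ v, (clN s ρ (G.eraseEdge e)).lab (φn v).1
      = (clN s ρ (H.eraseEdge e)).lab v.1 := fun v => (hφ0 v.1 v.2).2.1
  have hφn_inj : Function.Injective φn := by
    intro u w h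
    have hval : φ0 u.1 = φ0 w.1 := congrArg Subtype.val h
    obtain ⟨-, hlu, hiffu, hidu⟩ := hφ0 u.1 u.2
    obtain ⟨-, hlw, hiffw, hidw⟩ := hφ0 w.1 w.2
    by_cases huH : u.1 ∈ H.nodes
    · by_cases hwH : w.1 ∈ H.nodes
      · exact Subtype.ext (by rw [← hidu huH, ← hidw hwH, hval])
      · exact absurd (hiffw.1 (hval ▸ hiffu.2 huH)) hwH
    · by_cases hwH : w.1 ∈ H.nodes
      · exact absurd (hiffu.1 (hval ▸ hiffw.2 hwH)) huH
      · have hll : (clN s ρ (H.eraseEdge e)).lab u.1 = (clN s ρ (H.eraseEdge e)).lab w.1 := by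
          rw [← hlu, ← hlw, hval]
        exact Subtype.ext (clN_new_inj s ρ (H.eraseEdge e) u.2 w.2 huH hwH hll)
  -- g ∘ φn is an occurrence of clN(B)
  have hoccB : IsOcc s ρ (clN s ρ (H.eraseEdge e)) (fun v => g (φn v)) := by
    refine ⟨hginj.comp hφn_inj, ?_, ?_, fun u w => hgspan _ _⟩
    · intro v
      rw [hglab (φn v)]
      exact hφn_lab v
    · intro u w hedge
      have hmem := (H.eraseEdge e).edge_mem hedge
      have hu' : φn u = ⟨u.1, Finset.mem_union_left _ (hsub hmem.1)⟩ :=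
        Subtype.ext ((hφ0 u.1 u.2).2.2.2 hmem.1)
      have hw' : φn w = ⟨w.1, Finset.mem_union_left _ (hsub hmem.2)⟩ :=
        Subtype.ext ((hφ0 w.1 w.2).2.2.2 hmem.2)
      show g (φn u) < g (φn w)
      rw [hu', hw']
      exact hgmono _ _ (hBA _ _ hedge)
  -- s' covers the restriction of the i-closure to U
  have hUsub' : U ⊆ (clN s ρ (H.eraseEdge e)).nodes := hUsub
  have hcov : Covers s' ((Episode.icl s ρ (H.eraseEdge e)).restrict U) := by
    refine ⟨fun u => ci (rank (φn ⟨u.1, hUsub' u.2⟩)), ?_, ?_, ?_⟩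
    · intro u w h
      have hval := congrArg Fin.val h
      have h' : rank (φn ⟨u.1, hUsub' u.2⟩) = rank (φn ⟨w.1, hUsub' w.2⟩) :=
        Fin.ext hval
      have := hφn_inj (hrank_inj h')
      rw [Subtype.mk.injEq] at this
      exact Subtype.ext this
    · intro v
      rw [hci_get, hoi_rank, hglab]
      exact hφn_lab _
    · intro u w hedge
      obtain ⟨huU, hwU, hcle⟩ := hedge
      obtain ⟨hx, hy, hall⟩ := hcle
      have hlt := hall _ hoccB
      show ci _ < ci _
      have hr : rank (φn ⟨u.1, hUsub' u.2⟩) < rank (φn ⟨w.1, hUsub' w.2⟩) :=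
        (hrank_lt _ _).2 hlt
      exact hr
  obtain ⟨h, hhinj, hhlab, hhmono⟩ := hUcov s' hcov
  -- alignment of the two mappings
  set i0 : Fin n := rank ⟨e.1, h1⟩ with hi0_def
  set φa : ℕ → Fin n := fun w =>
    if hw : w ∈ (clN s ρ (G.eraseEdge e)).nodes then rank ⟨w, hw⟩ else i0 with hφa_def
  set ψa : ℕ → Fin n := fun w =>
    if hw : w ∈ H.nodes then ⟨(h ⟨w, hw⟩).1, by rw [← hlen]; exact (h ⟨w, hw⟩).2⟩ else i0
    with hψa_def
  have align : ∀ x : α, (x = G.lab e.1 ∨ x = G.lab e.2) →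
      ∀ u ∈ G.nodes.filter (fun u => G.lab u = x), φa u = ψa u := by
    intro x hx
    set T := G.nodes.filter (fun u => G.lab u = x) with hT
    have hTG : ∀ u ∈ T, u ∈ G.nodes := fun u hu => (Finset.mem_filter.1 hu).1
    have hTx : ∀ u ∈ T, G.lab u = x := fun u hu => (Finset.mem_filter.1 hu).2
    have hTH : ∀ u ∈ T, u ∈ H.nodes := by
      intro u hu
      refine hkeep u (hTG u hu) ?_
      rcases hx with hx | hx
      · exact Or.inl ((hTx u hu).trans hx)
      · exact Or.inr ((hTx u hu).trans hx)
    have hTNA : ∀ u ∈ T, u ∈ (clN s ρ (G.eraseEdge e)).nodes := fun u hu =>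
      Finset.mem_union_left _ (hTG u hu)
    have hφa_eq : ∀ u (hu : u ∈ T), φa u = rank ⟨u, hTNA u hu⟩ := by
      intro u hu
      rw [hφa_def]
      exact dif_pos (hTNA u hu)
    have hψa_eq : ∀ u (hu : u ∈ T), ψa u
        = ⟨(h ⟨u, hTH u hu⟩).1, by rw [← hlen]; exact (h ⟨u, hTH u hu⟩).2⟩ := by
      intro u hu
      rw [hψa_def]
      exact dif_pos (hTH u hu)
    have hφi : Set.InjOn φa T := by
      intro u hu w hw heq
      rw [Finset.mem_coe] at hu hw
      rw [hφa_eq u hu, hφa_eq w hw] at heq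
      have := hrank_inj heq
      rw [Subtype.mk.injEq] at this
      exact this
    have hψi : Set.InjOn ψa T := by
      intro u hu w hw heq
      rw [Finset.mem_coe] at hu hw
      rw [hψa_eq u hu, hψa_eq w hw] at heq
      have hv := congrArg Fin.val heq
      have := hhinj (Fin.ext (a := h ⟨u, hTH u hu⟩) (b := h ⟨w, hTH w hw⟩) hv)
      rw [Subtype.mk.injEq] at this
      exact this
    have hφm : ∀ u ∈ T, ∀ w ∈ T, H.edge u w → φa u < φa w := by
      intro u hu w hw hr
      have hne : (u, w) ≠ e := by
        intro hc
        apply hGne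
        have hu1 : u = e.1 := congrArg Prod.fst hc
        have hw2 : w = e.2 := congrArg Prod.snd hc
        rw [← hu1, ← hw2, hTx u hu, hTx w hw]
      rw [hφa_eq u hu, hφa_eq w hw]
      exact (hrank_lt _ _).2 (hgmono _ _ (⟨hHG _ _ hr, hne⟩ :
        (G.eraseEdge e).edge u w))
    have hψm : ∀ u ∈ T, ∀ w ∈ T, H.edge u w → ψa u < ψa w := by
      intro u hu w hw hr
      rw [hψa_eq u hu, hψa_eq w hw]
      exact hhmono ⟨u, hTH u hu⟩ ⟨w, hTH w hw⟩ hr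
    have himgP : T.image φa = Finset.univ.filter (fun i : Fin n => s.get (oi i).1 = x) := by
      apply Finset.Subset.antisymm
      · intro p hp
        obtain ⟨u, hu, rfl⟩ := Finset.mem_image.1 hp
        refine Finset.mem_filter.2 ⟨Finset.mem_univ _, ?_⟩
        rw [hφa_eq u hu, hoi_rank, hglab]
        show (clN s ρ (G.eraseEdge e)).lab u = x
        rw [clN_lab_mem s ρ (G.eraseEdge e) (hTG u hu : u ∈ (G.eraseEdge e).nodes)]
        exact hTx u hu
      · intro i hi
        rw [Finset.mem_filter] at hi
        obtain ⟨v, rfl⟩ := hrank_surj i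
        have hlabv : (clN s ρ (G.eraseEdge e)).lab v.1 = x := by
          rw [← hglab v, ← hoi_rank v]
          exact hi.2
        have hvG : v.1 ∈ G.nodes := by
          by_contra hvG
          obtain ⟨i', hi', -, -, hfilt⟩ := clN_new_node s ρ (G.eraseEdge e) v.2 hvG
          rw [filt, Finset.mem_filter] at hfilt
          rcases hx with hx | hx
          · exact hfilt.2.2 e.1 he1G (by
              show G.lab e.1 = _
              rw [hlabv, hx])
          · exact hfilt.2.2 e.2 he2G (by
              show G.lab e.2 = _
              rw [hlabv, hx])
        have hvT : v.1 ∈ T := by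
          refine Finset.mem_filter.2 ⟨hvG, ?_⟩
          rw [← hlabv, clN_lab_mem s ρ (G.eraseEdge e) (hvG : v.1 ∈ (G.eraseEdge e).nodes)]
          rfl
        refine Finset.mem_image.2 ⟨v.1, hvT, ?_⟩
        rw [hφa_eq v.1 hvT]
    have hψP : T.image ψa ⊆ Finset.univ.filter (fun i : Fin n => s.get (oi i).1 = x) := by
      intro p hp
      obtain ⟨u, hu, rfl⟩ := Finset.mem_image.1 hp
      refine Finset.mem_filter.2 ⟨Finset.mem_univ _, ?_⟩
      rw [hψa_eq u hu]
      have := hget (h ⟨u, hTH u hu⟩)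
      rw [hhlab ⟨u, hTH u hu⟩] at this
      rw [← this]
      show H.lab u = x
      rw [hlab]
      exact hTx u hu
    have himg : T.image φa = T.image ψa := by
      rw [himgP]
      refine (Finset.eq_of_subset_of_card_le hψP ?_).symm
      rw [← himgP, Finset.card_image_of_injOn hφi, Finset.card_image_of_injOn hψi]
    exact mono_bij_eq T H.edge
      (fun u hu w hw hne => htot u (hTH u hu) w (hTH w hw) hne
        ((hTx u hu).trans (hTx w hw).symm))
      φa ψa hφi hψi hφm hψm himg
  have he1T : e.1 ∈ G.nodes.filter (fun u => G.lab u = G.lab e.1) :=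
    Finset.mem_filter.2 ⟨he1G, rfl⟩
  have he2T : e.2 ∈ G.nodes.filter (fun u => G.lab u = G.lab e.2) :=
    Finset.mem_filter.2 ⟨he2G, rfl⟩
  have a1 := align (G.lab e.1) (Or.inl rfl) e.1 he1T
  have a2 := align (G.lab e.2) (Or.inr rfl) e.2 he2T
  have hstep : ψa e.1 < ψa e.2 := by
    rw [hψa_def]
    show dite _ _ _ < dite _ _ _
    rw [dif_pos he1H, dif_pos he2H]
    exact hhmono ⟨e.1, he1H⟩ ⟨e.2, he2H⟩ hHe
  rw [← a1, ← a2] at hstep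
  rw [hφa_def] at hstep
  change dite _ _ _ < dite _ _ _ at hstep
  rw [dif_pos h1, dif_pos h2] at hstep
  exact (hrank_lt _ _).1 hstep

end KeyOcc

section KeyLemma
variable {α : Type*} [LinearOrder α]

theorem key_lemma (s : List α) (ρ : ℕ) (G H : Episode α) (e : ℕ × ℕ)
    (hGedge : G.edge e.1 e.2)
    (hGne : G.lab e.1 ≠ G.lab e.2)
    (hlab : H.lab = G.lab)
    (hsub : H.nodes ⊆ G.nodes)
    (hHe : H.edge e.1 e.2)
    (hHG : ∀ u w, H.edge u w → G.edge u w)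
    (hkeep : ∀ u ∈ G.nodes, (G.lab u = G.lab e.1 ∨ G.lab u = G.lab e.2) → u ∈ H.nodes)
    (htot : ∀ u ∈ H.nodes, ∀ w ∈ H.nodes, u ≠ w → G.lab u = G.lab w →
      H.edge u w ∨ H.edge w u)
    (hBA : ∀ u w, (H.eraseEdge e).edge u w → (G.eraseEdge e).edge u w)
    (hsubep : Episode.Subep H (Episode.icl s ρ (H.eraseEdge e))) :
    Episode.Subep G (Episode.icl s ρ (G.eraseEdge e)) := by
  have he1G : e.1 ∈ G.nodes := (G.edge_mem hGedge).1
  have he2G : e.2 ∈ G.nodes := (G.edge_mem hGedge).2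
  have he1N : e.1 ∈ (clN s ρ (G.eraseEdge e)).nodes := Finset.mem_union_left _ he1G
  have he2N : e.2 ∈ (clN s ρ (G.eraseEdge e)).nodes := Finset.mem_union_left _ he2G
  refine ⟨G.nodes, ?_, rfl, ?_⟩
  · intro u hu
    exact Finset.mem_union_left _ hu
  · rintro s'' ⟨c, hci, hcl, hcm⟩
    refine ⟨c, hci, ?_, ?_⟩
    · intro v
      rw [hcl v]
      exact clN_lab_mem s ρ (G.eraseEdge e) (v.2 : v.1 ∈ (G.eraseEdge e).nodes)
    · intro u w hedge
      apply hcm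
      refine ⟨u.2, w.2, ?_⟩
      show ∃ (hx : u.1 ∈ (clN s ρ (G.eraseEdge e)).nodes)
        (hy : w.1 ∈ (clN s ρ (G.eraseEdge e)).nodes), _
      by_cases hc : (u.1, w.1) = e
      · have hu1 : u.1 = e.1 := congrArg Prod.fst hc
        have hw2 : w.1 = e.2 := congrArg Prod.snd hc
        rw [hu1, hw2]
        exact ⟨he1N, he2N, fun gf hgf =>
          key_occ s ρ G H e hGne he1G he2G hlab hsub hHe hHG hkeep htot hBA hsubep
            gf hgf he1N he2N⟩
      · exact ⟨Finset.mem_union_left _ u.2, Finset.mem_union_left _ w.2,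
          fun gf hgf => hgf.2.2.1 ⟨u.1, Finset.mem_union_left _ u.2⟩
            ⟨w.1, Finset.mem_union_left _ w.2⟩ ⟨hedge, hc⟩⟩

lemma solitary_no_transgen {G : Episode α} {v : ℕ} (hv : Episode.Solitary G v) :
    ∀ z, ¬ Relation.TransGen G.edge v z ∧ ¬ Relation.TransGen G.edge z v := by
  intro z
  constructor
  · intro h
    rcases Relation.TransGen.head'_iff.1 h with ⟨c, hc, -⟩
    exact (hv.2 c).2 hc
  · intro h
    rcases Relation.TransGen.tail'_iff.1 h with ⟨c, -, hc⟩
    exact (hv.2 c).1 hc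

end KeyLemma
open Episode in
/-- Non-derivable proper skeleton edges survive removal of other proper
skeleton edges and of solitary nodes: if `e` is a non-derivable proper
skeleton edge of `G ∈ 𝒮`, then `e` is a non-derivable proper skeleton edge of
`G − f` for every proper skeleton edge `f ≠ e`, and of `G − v` for every
solitary node `v`. -/
theorem stmt16 {α : Type*} [LinearOrder α] (s : List α) (ρ : ℕ)
    (G : Episode α) (hG : inS G) (e : ℕ × ℕ)
    (he : IsProperSkeletonEdge G e)
    (hnd : ¬ Subep G (icl s ρ (G.eraseEdge e))) :
    (∀ f, IsProperSkeletonEdge G f → f ≠ e →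
      IsProperSkeletonEdge (G.eraseEdge f) e ∧
      ¬ Subep (G.eraseEdge f) (icl s ρ ((G.eraseEdge f).eraseEdge e))) ∧
    ∀ v, Solitary G v →
      IsProperSkeletonEdge (G.eraseNode v) e ∧
      ¬ Subep (G.eraseNode v) (icl s ρ ((G.eraseNode v).eraseEdge e)) := by
  obtain ⟨hacy, htc, hstrict⟩ := hG
  have heta : (e.1, e.2) = e := rfl
  constructor
  · intro f hf hfe
    have hef : (e.1, e.2) ≠ f := by
      intro hc
      exact hfe (hc.symm.trans heta)
    constructor
    · exact ⟨⟨⟨he.1.1, hef⟩, fun ⟨u, hu1, hu2⟩ => he.1.2 ⟨u, hu1.1, hu2.1⟩⟩, he.2⟩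
    · intro hcontra
      apply hnd
      refine key_lemma s ρ G (G.eraseEdge f) e he.1.1 he.2 rfl (fun _ h => h)
        ⟨he.1.1, hef⟩ (fun u w h => h.1) (fun u hu _ => hu) ?_
        (fun u w h => ⟨h.1.1, h.2⟩) hcontra
      intro u hu w hw hne hl
      have hnef : ∀ a b : ℕ, G.lab a = G.lab b → (a, b) ≠ f := by
        intro a b hab hc
        have ha : a = f.1 := congrArg Prod.fst hc
        have hb : b = f.2 := congrArg Prod.snd hc
        exact hf.2 (by rw [← ha, ← hb]; exact hab)
      rcases hstrict u hu w hw hne hl with ht | ht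
      · exact Or.inl ⟨htc ht, hnef u w hl⟩
      · exact Or.inr ⟨htc ht, hnef w u hl.symm⟩
  · intro v hv
    have hv1 : e.1 ≠ v := fun hc => (hv.2 e.2).2 (by rw [← hc]; exact he.1.1)
    have hv2 : e.2 ≠ v := fun hc => (hv.2 e.1).1 (by rw [← hc]; exact he.1.1)
    have hlabv : ∀ u ∈ G.nodes, (G.lab u = G.lab e.1 ∨ G.lab u = G.lab e.2) → u ≠ v := by
      intro u hu hl hc
      subst hc
      rcases hl with hl | hl
      · by_cases huc : u = e.1
        · exact hv1 huc.symm
        · rcases hstrict u hu e.1 (G.edge_mem he.1.1).1 huc hl with ht | ht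
          · exact (solitary_no_transgen hv e.1).1 ht
          · exact (solitary_no_transgen hv e.1).2 ht
      · by_cases huc : u = e.2
        · exact hv2 huc.symm
        · rcases hstrict u hu e.2 (G.edge_mem he.1.1).2 huc hl with ht | ht
          · exact (solitary_no_transgen hv e.2).1 ht
          · exact (solitary_no_transgen hv e.2).2 ht
    constructor
    · exact ⟨⟨⟨he.1.1, hv1, hv2⟩, fun ⟨u, hu1, hu2⟩ => he.1.2 ⟨u, hu1.1, hu2.1⟩⟩, he.2⟩
    · intro hcontra
      apply hnd
      refine key_lemma s ρ G (G.eraseNode v) e he.1.1 he.2 rfl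
        (Finset.erase_subset _ _) ⟨he.1.1, hv1, hv2⟩ (fun u w h => h.1) ?_ ?_
        (fun u w h => ⟨h.1.1, h.2⟩) hcontra
      · intro u hu hl
        exact Finset.mem_erase.2 ⟨hlabv u hu hl, hu⟩
      · intro u hu w hw hne hl
        have hu' := Finset.mem_erase.1 (hu : u ∈ G.nodes.erase v)
        have hw' := Finset.mem_erase.1 (hw : w ∈ G.nodes.erase v)
        rcases hstrict u hu'.2 w hw'.2 hne hl with ht | ht
        · exact Or.inl ⟨htc ht, hu'.1, hw'.1⟩
        · exact Or.inr ⟨htc ht, hw'.1, hu'.1⟩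
end

section
/- Fix a sequence s and a window size ρ. Let H be a strict, transitively closed episode occurring in s within a window of length at most ρ. Then there exists a strict, transitively closed episode F with F ⪯ H, obtained from H by repeatedly removing derivable proper skeleton edges and derivable solitary nodes, such that F has no derivable proper skeleton edges and no derivable solitary nodes, H ⪯ icl(F), every non-derivable proper skeleton edge of H remains an edge of F, and every non-derivable solitary node of H remains a node of F. -/
open scoped Classical

namespace Episode

variable {α : Type*}

section Thm19

set_option linter.unusedSectionVars false

variable {α : Type*} [LinearOrder α] {s : List α} {ρ : ℕ}

/-- A label- and edge-preserving injective node map. -/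
def Emb (G K : Episode α) : Prop :=
  ∃ φ : {v // v ∈ G.nodes} → {v // v ∈ K.nodes},
    Function.Injective φ ∧ (∀ v, K.lab (φ v).1 = G.lab v.1) ∧
      ∀ u v, G.edge u.1 v.1 → K.edge (φ u).1 (φ v).1

lemma Emb.trans {G K L : Episode α} (h1 : Emb G K) (h2 : Emb K L) : Emb G L := by
  obtain ⟨φ, hφi, hφl, hφe⟩ := h1
  obtain ⟨ψ, hψi, hψl, hψe⟩ := h2
  exact ⟨ψ ∘ φ, hψi.comp hφi, fun v => (hψl _).trans (hφl v),
    fun u v h => hψe _ _ (hφe _ _ h)⟩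

lemma Emb.subep {G K : Episode α} (h : Emb G K) : Subep G K := by
  obtain ⟨φ, hφi, hφl, hφe⟩ := h
  refine ⟨G.nodes.attach.image (fun v => (φ v).1), ?_, ?_, ?_⟩
  · intro x hx
    obtain ⟨v, -, rfl⟩ := Finset.mem_image.1 hx
    exact (φ v).2
  · have hinj' : Function.Injective (fun v : {v // v ∈ G.nodes} => (φ v).1) :=
      fun a b h => hφi (Subtype.coe_injective h)
    rw [Finset.card_image_of_injective _ hinj', Finset.card_attach]
  · rintro t ⟨g, hgi, hgl, hge⟩
    have hmem : ∀ v : {v // v ∈ G.nodes},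
        (φ v).1 ∈ (K.restrict (G.nodes.attach.image (fun v => (φ v).1))).nodes := by
      intro v
      exact Finset.mem_image.2 ⟨v, Finset.mem_attach _ _, rfl⟩
    refine ⟨fun v => g ⟨(φ v).1, hmem v⟩, ?_, ?_, ?_⟩
    · intro a b hab
      have := hgi hab
      exact hφi (Subtype.coe_injective (by simpa using this))
    · intro v
      rw [hgl ⟨(φ v).1, hmem v⟩]
      exact hφl v
    · intro u v huv
      exact hge _ _ ⟨hmem u, hmem v, hφe _ _ huv⟩

/-- `G'` is a subgraph of `G` (with literally the same labelling function). -/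
def Sub (G' G : Episode α) : Prop :=
  G'.nodes ⊆ G.nodes ∧ (∀ ⦃x y⦄, G'.edge x y → G.edge x y) ∧ G'.lab = G.lab

lemma Sub.refl (G : Episode α) : Sub G G := ⟨le_refl _, fun _ _ h => h, rfl⟩

lemma Sub.trans {G1 G2 G3 : Episode α} (h1 : Sub G1 G2) (h2 : Sub G2 G3) : Sub G1 G3 :=
  ⟨h1.1.trans h2.1, fun _ _ h => h2.2.1 (h1.2.1 h), h1.2.2.trans h2.2.2⟩

lemma IsOcc.ofSub {G' G : Episode α} (hs : Sub G' G) {f} (hf : IsOcc s ρ G f) :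
    IsOcc s ρ G' (fun v => f ⟨v.1, hs.1 v.2⟩) := by
  obtain ⟨hinj, hlab, hedge, hwin⟩ := hf
  refine ⟨?_, ?_, ?_, ?_⟩
  · intro a b hab
    have := hinj hab
    exact Subtype.ext (by simpa using congrArg Subtype.val this)
  · intro v
    rw [hlab]
    simp [hs.2.2]
  · intro u v h
    exact hedge _ _ (hs.2.1 h)
  · intro u v
    exact hwin _ _

lemma Occurs.ofSub {G' G : Episode α} (hs : Sub G' G) (h : Occurs s ρ G) :
    Occurs s ρ G' := by
  obtain ⟨f, hf⟩ := h
  exact ⟨_, hf.ofSub hs⟩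

/-- The list of new labels added by the node closure. -/
noncomputable def newLabs (s : List α) (ρ : ℕ) (G : Episode α) : List α :=
  (s.toFinset.filter
      (fun x => (∀ f, IsOcc s ρ G f → SymInWindow s f x) ∧
        ∀ v ∈ G.nodes, G.lab v ≠ x)).sort (· ≤ ·)

/-- The numeric base for new nodes of the node closure. -/
def nbase (G : Episode α) : ℕ := G.nodes.sup id + 1

lemma clN_edge (G : Episode α) : (clN s ρ G).edge = G.edge := rfl

lemma clN_nodes (G : Episode α) : (clN s ρ G).nodes =
    G.nodes ∪ (Finset.range (newLabs s ρ G).length).image (fun i => nbase G + i) := rfl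

lemma nbase_add_not_mem (G : Episode α) (i : ℕ) : nbase G + i ∉ G.nodes := by
  intro h
  have h2 := Finset.le_sup (f := id) h
  simp only [id_eq] at h2
  rw [nbase] at h2
  omega

lemma mem_clN_nodes {G : Episode α} {v : ℕ} : v ∈ (clN s ρ G).nodes ↔
    v ∈ G.nodes ∨ ∃ i, ∃ _ : i < (newLabs s ρ G).length, v = nbase G + i := by
  rw [clN_nodes]
  simp only [Finset.mem_union, Finset.mem_image, Finset.mem_range]
  constructor
  · rintro (h | ⟨i, hi, rfl⟩)
    · exact Or.inl h
    · exact Or.inr ⟨i, hi, rfl⟩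
  · rintro (h | ⟨i, hi, rfl⟩)
    · exact Or.inl h
    · exact Or.inr ⟨i, hi, rfl⟩

lemma clN_lab_mem {G : Episode α} {v : ℕ} (h : v ∈ G.nodes) :
    (clN s ρ G).lab v = G.lab v := by
  show (if _ : _ ∧ _ ∧ _ then _ else _) = _
  rw [dif_neg]
  rintro ⟨-, -, hv⟩
  exact hv h

lemma clN_lab_new {G : Episode α} {i : ℕ} (h : i < (newLabs s ρ G).length) :
    (clN s ρ G).lab (nbase G + i) = (newLabs s ρ G).get ⟨i, h⟩ := by
  have hb : nbase G = G.nodes.sup id + 1 := rfl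
  have h1 : G.nodes.sup id + 1 ≤ nbase G + i := by omega
  have h2 : nbase G + i - (G.nodes.sup id + 1) < (newLabs s ρ G).length := by omega
  have h3 : nbase G + i ∉ G.nodes := nbase_add_not_mem G i
  show (if _ : _ ∧ _ ∧ _ then _ else _) = _
  rw [dif_pos ⟨h1, h2, h3⟩]
  congr 1
  exact Fin.ext (by simp only [Fin.val_mk]; rw [hb]; omega)

lemma newLabs_nodup (G : Episode α) : (newLabs s ρ G).Nodup := Finset.sort_nodup _ _

lemma mem_newLabs {G : Episode α} {x : α} : x ∈ newLabs s ρ G ↔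
    x ∈ s.toFinset ∧ (∀ f, IsOcc s ρ G f → SymInWindow s f x) ∧
      ∀ v ∈ G.nodes, G.lab v ≠ x := by
  rw [newLabs, Finset.mem_sort, Finset.mem_filter]

lemma lab_ne_newLabs {G : Episode α} {x : ℕ} (hx : x ∈ G.nodes) {j : ℕ}
    (hj : j < (newLabs s ρ G).length) :
    G.lab x ≠ (newLabs s ρ G).get ⟨j, hj⟩ := by
  have hm : (newLabs s ρ G).get ⟨j, hj⟩ ∈ newLabs s ρ G := List.get_mem _ _
  rw [mem_newLabs] at hm
  exact hm.2.2 x hx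

lemma exists_clN_occ {G : Episode α} {f} (hf : IsOcc s ρ G f) :
    ∃ g, IsOcc s ρ (clN s ρ G) g ∧
      (∀ v (hv : v.1 ∈ G.nodes), g v = f ⟨v.1, hv⟩) ∧
      (∀ v, (∃ a, f a ≤ g v) ∧ ∃ b, g v ≤ f b) := by
  classical
  have hP : ∀ i (hi : i < (newLabs s ρ G).length), ∃ j : Fin s.length,
      s.get j = (newLabs s ρ G).get ⟨i, hi⟩ ∧ (∃ u, f u ≤ j) ∧ ∃ w, j ≤ f w := by
    intro i hi
    have hx : (newLabs s ρ G).get ⟨i, hi⟩ ∈ newLabs s ρ G := List.get_mem _ _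
    rw [mem_newLabs] at hx
    exact hx.2.1 f hf
  choose κ hκ using hP
  have hmem : ∀ v : {v // v ∈ (clN s ρ G).nodes}, v.1 ∉ G.nodes →
      v.1 - nbase G < (newLabs s ρ G).length ∧ nbase G + (v.1 - nbase G) = v.1 := by
    intro v hv
    rcases mem_clN_nodes.1 v.2 with h | ⟨i, hi, hvi⟩
    · exact absurd h hv
    · constructor
      · rw [hvi]; omega
      · rw [hvi]; omega
  set g : {v // v ∈ (clN s ρ G).nodes} → Fin s.length :=
    fun v => if h : v.1 ∈ G.nodes then f ⟨v.1, h⟩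
      else κ (v.1 - nbase G) (hmem v h).1 with hgdef
  have hgold : ∀ (v : {v // v ∈ (clN s ρ G).nodes}) (hv : v.1 ∈ G.nodes),
      g v = f ⟨v.1, hv⟩ := by
    intro v hv; simp only [hgdef]; rw [dif_pos hv]
  have hgnew : ∀ (v : {v // v ∈ (clN s ρ G).nodes}) (hv : v.1 ∉ G.nodes),
      g v = κ (v.1 - nbase G) (hmem v hv).1 := by
    intro v hv; simp only [hgdef]; rw [dif_neg hv]
  have hlabval : ∀ (v : {v // v ∈ (clN s ρ G).nodes}) (hv : v.1 ∉ G.nodes),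
      (clN s ρ G).lab v.1 = (newLabs s ρ G).get ⟨v.1 - nbase G, (hmem v hv).1⟩ := by
    intro v hv
    have h2 := clN_lab_new (s := s) (ρ := ρ) (G := G) (hmem v hv).1
    have h3 : (clN s ρ G).lab v.1 = (clN s ρ G).lab (nbase G + (v.1 - nbase G)) := by
      rw [(hmem v hv).2]
    exact h3.trans h2
  have hbd : ∀ v, (∃ a, f a ≤ g v) ∧ ∃ b, g v ≤ f b := by
    intro v
    by_cases hv : v.1 ∈ G.nodes
    · rw [hgold v hv]; exact ⟨⟨_, le_refl _⟩, ⟨_, le_refl _⟩⟩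
    · rw [hgnew v hv]
      obtain ⟨-, ⟨u, hu⟩, ⟨w, hw⟩⟩ := hκ _ (hmem v hv).1
      exact ⟨⟨u, hu⟩, ⟨w, hw⟩⟩
  have hlab : ∀ v, s.get (g v) = (clN s ρ G).lab v.1 := by
    intro v
    by_cases hv : v.1 ∈ G.nodes
    · rw [hgold v hv, hf.2.1, clN_lab_mem hv]
    · rw [hgnew v hv, (hκ _ (hmem v hv).1).1, hlabval v hv]
  have hinj : Function.Injective g := by
    intro a b hab
    have hlabeq : (clN s ρ G).lab a.1 = (clN s ρ G).lab b.1 := by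
      rw [← hlab a, ← hlab b, hab]
    by_cases ha : a.1 ∈ G.nodes <;> by_cases hb : b.1 ∈ G.nodes
    · rw [hgold a ha, hgold b hb] at hab
      exact Subtype.ext (Subtype.mk_eq_mk.1 (hf.1 hab))
    · exfalso
      rw [clN_lab_mem ha, hlabval b hb] at hlabeq
      exact lab_ne_newLabs ha _ hlabeq
    · exfalso
      rw [clN_lab_mem hb, hlabval a ha] at hlabeq
      exact lab_ne_newLabs hb _ hlabeq.symm
    · rw [hlabval a ha, hlabval b hb] at hlabeq
      have := (List.Nodup.get_inj_iff (newLabs_nodup G)).1 hlabeq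
      have hval : a.1 - nbase G = b.1 - nbase G := by
        simpa using congrArg Fin.val this
      apply Subtype.ext
      rw [← (hmem a ha).2, ← (hmem b hb).2, hval]
  have hedge : ∀ u v, (clN s ρ G).edge u.1 v.1 → g u < g v := by
    intro u v h
    have h' : G.edge u.1 v.1 := h
    rw [hgold u (G.edge_mem h').1, hgold v (G.edge_mem h').2]
    exact hf.2.2.1 _ _ h'
  have hwin : ∀ u v, (g u : ℕ) < (g v : ℕ) + ρ := by
    intro u v
    obtain ⟨-, b, hb⟩ := hbd u
    obtain ⟨⟨a, ha⟩, -⟩ := hbd v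
    have h1 := hf.2.2.2 b a
    have hb' : (g u : ℕ) ≤ (f b : ℕ) := hb
    have ha' : (f a : ℕ) ≤ (g v : ℕ) := ha
    omega
  exact ⟨g, ⟨hinj, hlab, hedge, hwin⟩, hgold, hbd⟩

lemma Occurs.clN {G : Episode α} (h : Occurs s ρ G) : Occurs s ρ (clN s ρ G) := by
  obtain ⟨f, hf⟩ := h
  obtain ⟨g, hg, -, -⟩ := exists_clN_occ hf
  exact ⟨g, hg⟩

lemma icl_nodes (G : Episode α) : (icl s ρ G).nodes = (clN s ρ G).nodes := rfl

lemma icl_lab (G : Episode α) : (icl s ρ G).lab = (clN s ρ G).lab := rfl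

lemma icl_edge_iff {G : Episode α} {x y : ℕ} : (icl s ρ G).edge x y ↔
    ∃ (hx : x ∈ (clN s ρ G).nodes) (hy : y ∈ (clN s ρ G).nodes),
      ∀ g, IsOcc s ρ (clN s ρ G) g → g ⟨x, hx⟩ < g ⟨y, hy⟩ := Iff.rfl

lemma edge_icl {G : Episode α} {x y : ℕ} (h : G.edge x y) : (icl s ρ G).edge x y := by
  have hx : x ∈ (clN s ρ G).nodes := mem_clN_nodes.2 (Or.inl (G.edge_mem h).1)
  have hy : y ∈ (clN s ρ G).nodes := mem_clN_nodes.2 (Or.inl (G.edge_mem h).2)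
  exact ⟨hx, hy, fun g hg => hg.2.2.1 ⟨x, hx⟩ ⟨y, hy⟩ h⟩

lemma icl_lab_mem {G : Episode α} {v : ℕ} (h : v ∈ G.nodes) :
    (icl s ρ G).lab v = G.lab v := clN_lab_mem h

lemma emb_icl (G : Episode α) : Emb G (icl s ρ G) := by
  refine ⟨fun v => ⟨v.1, mem_clN_nodes.2 (Or.inl v.2)⟩, ?_, ?_, ?_⟩
  · intro a b hab
    exact Subtype.ext (Subtype.mk_eq_mk.1 hab)
  · intro v
    exact icl_lab_mem v.2
  · intro u v h
    exact edge_icl h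

lemma inS_icl {G : Episode α} (hG : inS G) (hocc : Occurs s ρ G) :
    inS (icl s ρ G) := by
  obtain ⟨hac, htc, hst⟩ := hG
  have htc' : (icl s ρ G).TransClosed := by
    intro u v h
    induction h with
    | single h => exact h
    | tail _ h2 ih =>
      obtain ⟨hx, hy, hxy⟩ := ih
      obtain ⟨hy', hz, hyz⟩ := h2
      exact ⟨hx, hz, fun g hg => lt_trans (hxy g hg) (hyz g hg)⟩
  refine ⟨?_, htc', ?_⟩
  · intro v hv
    obtain ⟨hx, hy, h⟩ := htc' hv
    obtain ⟨f, hf⟩ := hocc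
    obtain ⟨g, hg, -, -⟩ := exists_clN_occ hf
    exact lt_irrefl _ (h g hg)
  · intro u hu v hv hne hlab
    have hlab' : (clN s ρ G).lab u = (clN s ρ G).lab v := hlab
    have hu' : u ∈ (clN s ρ G).nodes := hu
    have hv' : v ∈ (clN s ρ G).nodes := hv
    rcases mem_clN_nodes.1 hu' with hu2 | ⟨i, hi, rfl⟩
    · rcases mem_clN_nodes.1 hv' with hv2 | ⟨j, hj, rfl⟩
      · rw [clN_lab_mem hu2, clN_lab_mem hv2] at hlab'
        rcases hst u hu2 v hv2 hne hlab' with h | h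
        · exact Or.inl (Relation.TransGen.single (edge_icl (htc h)))
        · exact Or.inr (Relation.TransGen.single (edge_icl (htc h)))
      · exfalso
        rw [clN_lab_mem hu2, clN_lab_new hj] at hlab'
        exact lab_ne_newLabs hu2 hj hlab'
    · rcases mem_clN_nodes.1 hv' with hv2 | ⟨j, hj, rfl⟩
      · exfalso
        rw [clN_lab_mem hv2, clN_lab_new hi] at hlab'
        exact lab_ne_newLabs hv2 hi hlab'.symm
      · exfalso
        rw [clN_lab_new hi, clN_lab_new hj] at hlab'
        have := (List.Nodup.get_inj_iff (newLabs_nodup G)).1 hlab'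
        have : i = j := by simpa using congrArg Fin.val this
        exact hne (by rw [this])

lemma inS_restrict {K : Episode α} {U : Finset ℕ} (hK : inS K) (hU : U ⊆ K.nodes) :
    inS (K.restrict U) := by
  obtain ⟨hac, htc, hst⟩ := hK
  have hmono : ∀ {u v}, Relation.TransGen (K.restrict U).edge u v →
      u ∈ U ∧ v ∈ U ∧ Relation.TransGen K.edge u v := by
    intro u v h
    induction h with
    | single h => exact ⟨h.1, h.2.1, Relation.TransGen.single h.2.2⟩
    | tail _ h2 ih => exact ⟨ih.1, h2.2.1, ih.2.2.tail h2.2.2⟩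
  refine ⟨?_, ?_, ?_⟩
  · intro v hv; exact hac v (hmono hv).2.2
  · intro u v h
    obtain ⟨h1, h2, h3⟩ := hmono h
    exact ⟨h1, h2, htc h3⟩
  · intro u hu v hv hne hlab
    rcases hst u (hU hu) v (hU hv) hne hlab with h | h
    · exact Or.inl (Relation.TransGen.single ⟨hu, hv, htc h⟩)
    · exact Or.inr (Relation.TransGen.single ⟨hv, hu, htc h⟩)

lemma linext {β : Type*} (r : β → β → Prop) (hirr : ∀ a, ¬ r a a)
    (htr : ∀ {a b c}, r a b → r b c → r a c) :
    ∃ L : β → β → Prop, IsLinearOrder β L ∧ ∀ a b, r a b → L a b ∧ a ≠ b := by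
  have hpo : IsPartialOrder β (fun a b => r a b ∨ a = b) := by
    refine { refl := ?_, trans := ?_, antisymm := ?_ }
    · exact fun a => Or.inr rfl
    · rintro a b c (h1 | rfl) (h2 | rfl)
      · exact Or.inl (htr h1 h2)
      · exact Or.inl h1
      · exact Or.inl h2
      · exact Or.inr rfl
    · rintro a b (h1 | rfl) (h2 | h2)
      · exact absurd (htr h1 h2) (hirr a)
      · exact h2.symm
      · rfl
      · rfl
  obtain ⟨L, hL, hrL⟩ := @extend_partialOrder β _ hpo
  refine ⟨L, hL, fun a b h => ⟨hrL a b (Or.inl h), ?_⟩⟩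
  rintro rfl
  exact hirr a h

lemma subep_emb {G K : Episode α} (hG : inS G) (hK : inS K)
    (hcard : K.nodes.card = G.nodes.card)
    (hcov : ∀ t : List α, Covers t K → Covers t G) : Emb G K := by
  classical
  obtain ⟨hGac, hGtc, hGst⟩ := hG
  obtain ⟨hKac, hKtc, hKst⟩ := hK
  set r : {v // v ∈ K.nodes} → {v // v ∈ K.nodes} → Prop :=
    fun a b => K.edge a.1 b.1 with hrdef
  have hirr : ∀ a, ¬ r a a := fun a h => hKac a.1 (Relation.TransGen.single h)
  have htr : ∀ {a b c}, r a b → r b c → r a c := fun {a b c} h1 h2 =>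
    hKtc (Relation.TransGen.tail
      (Relation.TransGen.single (show K.edge a.1 b.1 from h1))
      (show K.edge b.1 c.1 from h2))
  have hedge_of_same : ∀ a b : {v // v ∈ K.nodes}, a ≠ b →
      K.lab a.1 = K.lab b.1 → r a b ∨ r b a := by
    intro a b hne hlab
    have hne' : a.1 ≠ b.1 := fun h => hne (Subtype.ext h)
    rcases hKst a.1 a.2 b.1 b.2 hne' hlab with h | h
    · exact Or.inl (hKtc h)
    · exact Or.inr (hKtc h)
  set rkK : {v // v ∈ K.nodes} → ℕ := fun b =>
    (Finset.univ.filter (fun u : {v // v ∈ K.nodes} =>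
      K.lab u.1 = K.lab b.1 ∧ K.edge u.1 b.1)).card with hrkK
  set rkG : {v // v ∈ G.nodes} → ℕ := fun b =>
    (Finset.univ.filter (fun u : {v // v ∈ G.nodes} =>
      G.lab u.1 = G.lab b.1 ∧ G.edge u.1 b.1)).card with hrkG
  have hrk_det : ∀ a b : {v // v ∈ K.nodes}, K.lab a.1 = K.lab b.1 →
      rkK a = rkK b → a = b := by
    have key : ∀ a b : {v // v ∈ K.nodes}, K.lab a.1 = K.lab b.1 → r a b →
        rkK a < rkK b := by
      intro a b hlab hab
      apply Finset.card_lt_card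
      constructor
      · intro u hu
        rw [Finset.mem_filter] at hu ⊢
        exact ⟨Finset.mem_univ _, ⟨hu.2.1.trans hlab, htr hu.2.2 hab⟩⟩
      · intro hsub
        have ha : a ∈ Finset.univ.filter (fun u : {v // v ∈ K.nodes} =>
            K.lab u.1 = K.lab b.1 ∧ K.edge u.1 b.1) := by
          rw [Finset.mem_filter]; exact ⟨Finset.mem_univ _, hlab, hab⟩
        have h2 := hsub ha
        rw [Finset.mem_filter] at h2
        exact hirr a h2.2.2
    intro a b hlab hrk
    by_contra hne
    rcases hedge_of_same a b hne hlab with h | h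
    · exact absurd hrk (ne_of_lt (key a b hlab h))
    · exact absurd hrk.symm (ne_of_lt (key b a hlab.symm h))
  letI : Fintype {v // v ∈ K.nodes} := FinsetCoe.fintype _
  letI : Fintype {v // v ∈ G.nodes} := FinsetCoe.fintype _
  have hcardK' : Fintype.card {v // v ∈ K.nodes} = K.nodes.card := Fintype.card_coe _
  have hcardG' : Fintype.card {v // v ∈ G.nodes} = K.nodes.card := by
    rw [Fintype.card_coe]; exact hcard.symm
  have main : ∀ L : {v // v ∈ K.nodes} → {v // v ∈ K.nodes} → Prop,
      IsLinearOrder _ L → (∀ a b, r a b → L a b ∧ a ≠ b) →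
      ∃ χ : {v // v ∈ G.nodes} → {v // v ∈ K.nodes}, Function.Injective χ ∧
        (∀ v, K.lab (χ v).1 = G.lab v.1) ∧
        (∀ u v, G.edge u.1 v.1 → L (χ u) (χ v) ∧ χ u ≠ χ v) := by
    intro L hL hrL
    have hLtr : ∀ a b c, L a b → L b c → L a c :=
      hL.toIsPartialOrder.toIsPreorder.toIsTrans.trans
    have hLas : ∀ a b, L a b → L b a → a = b :=
      hL.toIsPartialOrder.toAntisymm.antisymm
    have hLtot : ∀ a b, L a b ∨ L b a := hL.toTotal.total
    haveI : IsTrans {v // v ∈ K.nodes} L := ⟨hLtr⟩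
    haveI : IsAntisymm {v // v ∈ K.nodes} L := ⟨hLas⟩
    haveI : IsTotal {v // v ∈ K.nodes} L := ⟨hLtot⟩
    haveI : DecidableRel L := Classical.decRel _
    set ℓ : List {v // v ∈ K.nodes} := Finset.univ.sort L with hldef
    have hnodup : ℓ.Nodup := Finset.sort_nodup _ _
    have hsorted : ℓ.Pairwise L := Finset.pairwise_sort _ _
    have hmeml : ∀ a : {v // v ∈ K.nodes}, a ∈ ℓ := fun a => by
      rw [hldef, Finset.mem_sort]; exact Finset.mem_univ a
    have hidx : ∀ a : {v // v ∈ K.nodes}, ℓ.idxOf a < ℓ.length :=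
      fun a => List.idxOf_lt_length_iff.2 (hmeml a)
    have hidxget : ∀ a : {v // v ∈ K.nodes}, ℓ.get ⟨ℓ.idxOf a, hidx a⟩ = a :=
      fun a => List.idxOf_get (hidx a)
    have hgetlt : ∀ (i j : ℕ) (hi : i < ℓ.length) (hj : j < ℓ.length), i < j →
        L (ℓ.get ⟨i, hi⟩) (ℓ.get ⟨j, hj⟩) :=
      fun i j hi hj hij => List.pairwise_iff_get.1 hsorted ⟨i, hi⟩ ⟨j, hj⟩ hij
    set t : List α := ℓ.map (fun a => K.lab a.1) with htdef
    have ht : t.length = ℓ.length := List.length_map _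
    have hget : ∀ (i : ℕ) (h : i < t.length), t.get ⟨i, h⟩
        = K.lab (ℓ.get ⟨i, lt_of_lt_of_eq h ht⟩).1 := by
      intro i h
      simp only [htdef, List.get_eq_getElem, List.getElem_map]
    have hcovK : Covers t K := by
      refine ⟨fun v => ⟨ℓ.idxOf v, lt_of_lt_of_eq (hidx v) ht.symm⟩, ?_, ?_, ?_⟩
      · intro a b hab
        have h1 : ℓ.idxOf a = ℓ.idxOf b := congrArg Fin.val hab
        rw [← hidxget a, ← hidxget b]
        congr 1
        exact Fin.ext h1
      · intro v
        rw [hget]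
        exact congrArg (fun a : {v // v ∈ K.nodes} => K.lab a.1) (hidxget v)
      · intro u v huv
        obtain ⟨h1, h2⟩ := hrL u v huv
        show (⟨ℓ.idxOf u, _⟩ : Fin t.length) < ⟨ℓ.idxOf v, _⟩
        rw [Fin.mk_lt_mk]
        rcases lt_trichotomy (ℓ.idxOf u) (ℓ.idxOf v) with h | h | h
        · exact h
        · exfalso
          apply h2
          rw [← hidxget u, ← hidxget v]
          congr 1
          exact Fin.ext h
        · exfalso
          have h3 := hgetlt _ _ (hidx v) (hidx u) h
          rw [hidxget u, hidxget v] at h3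
          exact h2 (hLas _ _ h1 h3)
    obtain ⟨ψ, hψi, hψl, hψe⟩ := hcov t hcovK
    set χ : {v // v ∈ G.nodes} → {v // v ∈ K.nodes} :=
      fun v => ℓ.get ⟨(ψ v : ℕ), lt_of_lt_of_eq (ψ v).2 ht⟩ with hχdef
    refine ⟨χ, ?_, ?_, ?_⟩
    · intro a b hab
      apply hψi
      have h2 := (List.Nodup.get_inj_iff hnodup).1 hab
      exact Fin.ext (Fin.mk_eq_mk.1 h2)
    · intro v
      have h1 := hget (ψ v) (ψ v).2
      have h2 : t.get ⟨(ψ v : ℕ), (ψ v).2⟩ = t.get (ψ v) := by congr 1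
      rw [hχdef]
      simp only []
      rw [← h1, h2, hψl]
    · intro u v huv
      have h1 := hψe u v huv
      have hlt : (ψ u : ℕ) < (ψ v : ℕ) := h1
      constructor
      · exact hgetlt _ _ _ _ hlt
      · intro h
        have h2 := (List.Nodup.get_inj_iff hnodup).1 h
        have h3 : (ψ u : ℕ) = (ψ v : ℕ) := Fin.mk_eq_mk.1 h2
        omega
  -- every χ coming from a linear extension preserves same-label edges
  have hsame : ∀ (L : {v // v ∈ K.nodes} → {v // v ∈ K.nodes} → Prop)
      (hL : IsLinearOrder _ L) (hrL : ∀ a b, r a b → L a b ∧ a ≠ b)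
      (χ : {v // v ∈ G.nodes} → {v // v ∈ K.nodes})
      (hχl : ∀ v, K.lab (χ v).1 = G.lab v.1)
      (hχe : ∀ u v, G.edge u.1 v.1 → L (χ u) (χ v) ∧ χ u ≠ χ v),
      ∀ u v, G.lab u.1 = G.lab v.1 → G.edge u.1 v.1 → r (χ u) (χ v) := by
    intro L hL hrL χ hχl hχe u v hlab he
    have h1 := hχe u v he
    have hlabK : K.lab (χ u).1 = K.lab (χ v).1 := by rw [hχl, hχl, hlab]
    rcases hedge_of_same (χ u) (χ v) h1.2 hlabK with h | h
    · exact h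
    · exact absurd (hL.toIsPartialOrder.toAntisymm.antisymm _ _ h1.1
        (hrL _ _ h).1) h1.2
  -- ranks are preserved
  have hrank : ∀ (L : {v // v ∈ K.nodes} → {v // v ∈ K.nodes} → Prop)
      (hL : IsLinearOrder _ L) (hrL : ∀ a b, r a b → L a b ∧ a ≠ b)
      (χ : {v // v ∈ G.nodes} → {v // v ∈ K.nodes})
      (hχi : Function.Injective χ)
      (hχl : ∀ v, K.lab (χ v).1 = G.lab v.1)
      (hχe : ∀ u v, G.edge u.1 v.1 → L (χ u) (χ v) ∧ χ u ≠ χ v),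
      ∀ v, rkK (χ v) = rkG v := by
    intro L hL hrL χ hχi hχl hχe v
    have hbij : Function.Bijective χ := by
      rw [Fintype.bijective_iff_injective_and_card]
      exact ⟨hχi, by rw [hcardG', hcardK']⟩
    have himg : (Finset.univ.filter (fun u : {v // v ∈ G.nodes} =>
          G.lab u.1 = G.lab v.1 ∧ G.edge u.1 v.1)).image χ
        = Finset.univ.filter (fun b : {v // v ∈ K.nodes} =>
          K.lab b.1 = K.lab (χ v).1 ∧ K.edge b.1 (χ v).1) := by
      apply Finset.ext
      intro b
      simp only [Finset.mem_image, Finset.mem_filter, Finset.mem_univ, true_and]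
      constructor
      · rintro ⟨u, ⟨hul, hue⟩, rfl⟩
        exact ⟨by rw [hχl, hχl, hul], hsame L hL hrL χ hχl hχe u v hul hue⟩
      · rintro ⟨hbl, hbe⟩
        obtain ⟨u, rfl⟩ := hbij.2 b
        have hul : G.lab u.1 = G.lab v.1 := by rw [← hχl, ← hχl]; exact hbl
        refine ⟨u, ⟨hul, ?_⟩, rfl⟩
        have hne : u ≠ v := by rintro rfl; exact hirr _ hbe
        rcases hGst u.1 u.2 v.1 v.2 (fun h => hne (Subtype.ext h)) hul with h | h
        · exact hGtc h
        · exfalso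
          have h2 := hsame L hL hrL χ hχl hχe v u hul.symm (hGtc h)
          exact hKac _ (Relation.TransGen.tail (Relation.TransGen.single hbe)
            (show K.edge (χ v).1 (χ u).1 from h2))
    have h3 : rkK (χ v) = ((Finset.univ.filter (fun u : {v // v ∈ G.nodes} =>
        G.lab u.1 = G.lab v.1 ∧ G.edge u.1 v.1)).image χ).card := by
      rw [himg]
    rw [h3, Finset.card_image_of_injective _ hχi]
  obtain ⟨L₁, hL₁, hrL₁⟩ := linext r hirr (fun h1 h2 => htr h1 h2)
  obtain ⟨χ₁, hχ₁i, hχ₁l, hχ₁e⟩ := main L₁ hL₁ hrL₁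
  refine ⟨χ₁, hχ₁i, hχ₁l, ?_⟩
  intro u v he
  show r (χ₁ u) (χ₁ v)
  by_contra hne
  have h1 := hχ₁e u v he
  by_cases hrev : r (χ₁ v) (χ₁ u)
  · exact h1.2 (hL₁.toIsPartialOrder.toAntisymm.antisymm _ _ h1.1
      (hrL₁ _ _ hrev).1)
  · set rr : {v // v ∈ K.nodes} → {v // v ∈ K.nodes} → Prop :=
      fun a b => r a b ∨ a = b with hrrdef
    have hrrtr : ∀ {a b c}, rr a b → rr b c → rr a c := by
      rintro a b c (h | rfl) (h' | rfl)
      · exact Or.inl (htr h h')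
      · exact Or.inl h
      · exact Or.inl h'
      · exact Or.inr rfl
    have hnotuv : ¬ rr (χ₁ u) (χ₁ v) := by
      rintro (h | h)
      · exact hne h
      · exact h1.2 h
    set r2 : {v // v ∈ K.nodes} → {v // v ∈ K.nodes} → Prop :=
      fun a b => r a b ∨ (rr a (χ₁ v) ∧ rr (χ₁ u) b) with hr2def
    have h2irr : ∀ a, ¬ r2 a a := by
      rintro a (h | ⟨ha1, ha2⟩)
      · exact hirr a h
      · exact hnotuv (hrrtr ha2 ha1)
    have h2tr : ∀ {a b c}, r2 a b → r2 b c → r2 a c := by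
      rintro a b c (hab | ⟨hb1, hb2⟩) (hbc | ⟨hc1, hc2⟩)
      · exact Or.inl (htr hab hbc)
      · exact Or.inr ⟨hrrtr (Or.inl hab) hc1, hc2⟩
      · exact Or.inr ⟨hb1, hrrtr hb2 (Or.inl hbc)⟩
      · exact absurd (hrrtr hb2 hc1) hnotuv
    obtain ⟨L₂, hL₂, hrL₂⟩ := linext r2 h2irr h2tr
    have hrL₂' : ∀ a b, r a b → L₂ a b ∧ a ≠ b := fun a b h => hrL₂ a b (Or.inl h)
    obtain ⟨χ₂, hχ₂i, hχ₂l, hχ₂e⟩ := main L₂ hL₂ hrL₂'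
    have huniq : ∀ w, χ₂ w = χ₁ w := by
      intro w
      apply hrk_det
      · rw [hχ₂l, hχ₁l]
      · rw [hrank L₂ hL₂ hrL₂' χ₂ hχ₂i hχ₂l hχ₂e w,
          hrank L₁ hL₁ hrL₁ χ₁ hχ₁i hχ₁l hχ₁e w]
    have h3 := hχ₂e u v he
    rw [huniq u, huniq v] at h3
    have h4 := hrL₂ (χ₁ v) (χ₁ u) (Or.inr ⟨Or.inr rfl, Or.inr rfl⟩)
    exact h3.2 (hL₂.toIsPartialOrder.toAntisymm.antisymm _ _ h3.1 h4.1)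

lemma Subep.emb {G K : Episode α} (hG : inS G) (hK : inS K) (h : Subep G K) :
    Emb G K := by
  obtain ⟨U, hU, hcard, hcov⟩ := h
  have h1 : Emb G (K.restrict U) := subep_emb hG (inS_restrict hK hU) hcard hcov
  refine h1.trans ⟨fun v => ⟨v.1, hU v.2⟩, ?_, ?_, ?_⟩
  · intro a b hab
    exact Subtype.ext (Subtype.mk_eq_mk.1 hab)
  · intro v; rfl
  · intro u v h
    exact h.2.2

lemma clN_node_cases {G : Episode α} {v : ℕ} (hv : v ∈ (clN s ρ G).nodes)
    (h : v ∉ G.nodes) :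
    v - nbase G < (newLabs s ρ G).length ∧ nbase G + (v - nbase G) = v := by
  rcases mem_clN_nodes.1 hv with h' | ⟨i, hi, rfl⟩
  · exact absurd h' h
  · constructor
    · omega
    · omega

lemma clN_lab_of_not_mem {G : Episode α} {v : ℕ} (hv : v ∈ (clN s ρ G).nodes)
    (h : v ∉ G.nodes) :
    (clN s ρ G).lab v = (newLabs s ρ G).get
      ⟨v - nbase G, (clN_node_cases hv h).1⟩ := by
  have h2 := clN_lab_new (s := s) (ρ := ρ) (G := G) (clN_node_cases hv h).1
  have h3 : (clN s ρ G).lab v = (clN s ρ G).lab (nbase G + (v - nbase G)) := by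
    rw [(clN_node_cases hv h).2]
  exact h3.trans h2

/-- Core transport lemma: a suitable map `A → icl B` extends to `icl A → icl B`. -/
lemma emb_icl_of (A B : Episode α)
    (φ₀ : {v // v ∈ A.nodes} → {v // v ∈ (icl s ρ B).nodes})
    (hinj : Function.Injective φ₀)
    (hlab : ∀ v, (icl s ρ B).lab (φ₀ v).1 = A.lab v.1)
    (hocc : ∀ g, IsOcc s ρ (clN s ρ B) g → IsOcc s ρ A (fun v => g (φ₀ v)))
    (hnew : ∀ x, x ∈ newLabs s ρ A →
      ∃ w : {v // v ∈ (icl s ρ B).nodes}, (icl s ρ B).lab w.1 = x) :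
    Emb (icl s ρ A) (icl s ρ B) := by
  classical
  have htgt : ∀ i (hi : i < (newLabs s ρ A).length),
      ∃ w : {v // v ∈ (icl s ρ B).nodes},
        (icl s ρ B).lab w.1 = (newLabs s ρ A).get ⟨i, hi⟩ :=
    fun i hi => hnew _ (List.get_mem _ _)
  choose tgt htgtl using htgt
  have hmem : ∀ v : {v // v ∈ (icl s ρ A).nodes}, v.1 ∉ A.nodes →
      v.1 - nbase A < (newLabs s ρ A).length ∧
        nbase A + (v.1 - nbase A) = v.1 :=
    fun v hv => clN_node_cases v.2 hv
  set φ : {v // v ∈ (icl s ρ A).nodes} → {v // v ∈ (icl s ρ B).nodes} :=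
    fun v => if h : v.1 ∈ A.nodes then φ₀ ⟨v.1, h⟩
      else tgt (v.1 - nbase A) (hmem v h).1 with hφdef
  have hφold : ∀ (v : {v // v ∈ (icl s ρ A).nodes}) (hv : v.1 ∈ A.nodes),
      φ v = φ₀ ⟨v.1, hv⟩ := by
    intro v hv; simp only [hφdef]; rw [dif_pos hv]
  have hφnew : ∀ (v : {v // v ∈ (icl s ρ A).nodes}) (hv : v.1 ∉ A.nodes),
      φ v = tgt (v.1 - nbase A) (hmem v hv).1 := by
    intro v hv; simp only [hφdef]; rw [dif_neg hv]
  have hφlab : ∀ v, (icl s ρ B).lab (φ v).1 = (icl s ρ A).lab v.1 := by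
    intro v
    by_cases hv : v.1 ∈ A.nodes
    · rw [hφold v hv, hlab, icl_lab_mem hv]
    · rw [hφnew v hv, htgtl]
      exact (clN_lab_of_not_mem v.2 hv).symm
  have hφinj : Function.Injective φ := by
    intro a b hab
    have hlabeq : (icl s ρ A).lab a.1 = (icl s ρ A).lab b.1 := by
      rw [← hφlab a, ← hφlab b, hab]
    by_cases ha : a.1 ∈ A.nodes <;> by_cases hb : b.1 ∈ A.nodes
    · rw [hφold a ha, hφold b hb] at hab
      exact Subtype.ext (Subtype.mk_eq_mk.1 (hinj hab))
    · exfalso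
      have h1 : (icl s ρ A).lab a.1 = A.lab a.1 := icl_lab_mem ha
      have h2 := clN_lab_of_not_mem b.2 hb
      rw [h1] at hlabeq
      rw [show (icl s ρ A).lab b.1 = (clN s ρ A).lab b.1 from rfl, h2] at hlabeq
      exact lab_ne_newLabs ha _ hlabeq
    · exfalso
      have h1 : (icl s ρ A).lab b.1 = A.lab b.1 := icl_lab_mem hb
      have h2 := clN_lab_of_not_mem a.2 ha
      rw [h1] at hlabeq
      rw [show (icl s ρ A).lab a.1 = (clN s ρ A).lab a.1 from rfl, h2] at hlabeq
      exact lab_ne_newLabs hb _ hlabeq.symm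
    · have h2 := clN_lab_of_not_mem a.2 ha
      have h3 := clN_lab_of_not_mem b.2 hb
      rw [show (icl s ρ A).lab a.1 = (clN s ρ A).lab a.1 from rfl, h2,
        show (icl s ρ A).lab b.1 = (clN s ρ A).lab b.1 from rfl, h3] at hlabeq
      have h4 := (List.Nodup.get_inj_iff (newLabs_nodup A)).1 hlabeq
      have h5 : a.1 - nbase A = b.1 - nbase A := Fin.mk_eq_mk.1 h4
      apply Subtype.ext
      rw [← (hmem a ha).2, ← (hmem b hb).2, h5]
  have hocc' : ∀ g, IsOcc s ρ (clN s ρ B) g →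
      IsOcc s ρ (clN s ρ A) (fun v => g (φ v)) := by
    intro g hg
    refine ⟨fun a b hab => hφinj (hg.1 hab), ?_, ?_, fun u v => hg.2.2.2 _ _⟩
    · intro v
      refine (hg.2.1 _).trans ?_
      exact hφlab v
    · intro u v he
      have he' : A.edge u.1 v.1 := he
      have hu := (A.edge_mem he').1
      have hv := (A.edge_mem he').2
      show g (φ u) < g (φ v)
      rw [hφold u hu, hφold v hv]
      exact (hocc g hg).2.2.1 ⟨u.1, hu⟩ ⟨v.1, hv⟩ he'
  refine ⟨φ, hφinj, fun v => hφlab v, ?_⟩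
  intro u v he
  obtain ⟨hx, hy, h⟩ := he
  exact ⟨(φ u).2, (φ v).2, fun g hg => h (fun w => g (φ w)) (hocc' g hg)⟩

/-- Monotonicity of `icl` under subgraphs. -/
lemma mono_emb {S' S : Episode α} (hs : Sub S' S) :
    Emb (icl s ρ S') (icl s ρ S) := by
  refine emb_icl_of S' S
    (fun v => ⟨v.1, mem_clN_nodes.2 (Or.inl (hs.1 v.2))⟩) ?_ ?_ ?_ ?_
  · intro a b hab
    exact Subtype.ext (Subtype.mk_eq_mk.1 hab)
  · intro v
    rw [icl_lab_mem (hs.1 v.2), hs.2.2]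
  · intro g hg
    refine ⟨?_, ?_, ?_, fun u v => hg.2.2.2 _ _⟩
    · intro a b hab
      exact Subtype.ext (Subtype.mk_eq_mk.1 (hg.1 hab))
    · intro v
      refine (hg.2.1 _).trans ?_
      show (clN s ρ S).lab v.1 = S'.lab v.1
      rw [clN_lab_mem (hs.1 v.2), hs.2.2]
    · intro u v he
      exact hg.2.2.1 _ _ (hs.2.1 he)
  · intro x hx
    rw [mem_newLabs] at hx
    obtain ⟨hxs, hxw, hxl⟩ := hx
    by_cases hm : ∃ w ∈ S.nodes, S.lab w = x
    · obtain ⟨w, hw, hwl⟩ := hm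
      exact ⟨⟨w, mem_clN_nodes.2 (Or.inl hw)⟩, by rw [icl_lab_mem hw]; exact hwl⟩
    · have hxS : x ∈ newLabs s ρ S := by
        rw [mem_newLabs]
        refine ⟨hxs, ?_, fun v hv hl => hm ⟨v, hv, hl⟩⟩
        intro f hf
        obtain ⟨i, hi, ⟨u, hu⟩, ⟨w, hw⟩⟩ := hxw _ (hf.ofSub hs)
        exact ⟨i, hi, ⟨⟨u.1, hs.1 u.2⟩, hu⟩, ⟨⟨w.1, hs.1 w.2⟩, hw⟩⟩
      obtain ⟨n, hn⟩ := List.mem_iff_get.1 hxS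
      refine ⟨⟨nbase S + n.1, mem_clN_nodes.2 (Or.inr ⟨n.1, n.2, rfl⟩)⟩, ?_⟩
      show (clN s ρ S).lab _ = x
      rw [clN_lab_new n.2, ← hn]
  
/-- The icl extension lemma: `Emb A (icl B)` extends to `Emb (icl A) (icl B)`. -/
lemma iclext_emb {A B : Episode α}
    (hemb : Emb A (icl s ρ B)) : Emb (icl s ρ A) (icl s ρ B) := by
  obtain ⟨φ, hφi, hφl, hφe⟩ := hemb
  have hocc : ∀ g, IsOcc s ρ (clN s ρ B) g → IsOcc s ρ A (fun v => g (φ v)) := by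
    intro g hg
    refine ⟨fun a b hab => hφi (hg.1 hab), ?_, ?_, fun u v => hg.2.2.2 _ _⟩
    · intro v
      refine (hg.2.1 _).trans ?_
      exact hφl v
    · intro u v he
      obtain ⟨h1, h2, h3⟩ := hφe u v he
      exact h3 g hg
  refine emb_icl_of A B φ hφi hφl hocc ?_
  · intro x hx
    rw [mem_newLabs] at hx
    obtain ⟨hxs, hxw, hxl⟩ := hx
    by_cases hm : ∃ w ∈ B.nodes, B.lab w = x
    · obtain ⟨w, hw, hwl⟩ := hm
      exact ⟨⟨w, mem_clN_nodes.2 (Or.inl hw)⟩, by rw [icl_lab_mem hw]; exact hwl⟩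
    · have hxB : x ∈ newLabs s ρ B := by
        rw [mem_newLabs]
        refine ⟨hxs, ?_, fun v hv hl => hm ⟨v, hv, hl⟩⟩
        intro f hf
        obtain ⟨g, hg, -, hbd⟩ := exists_clN_occ hf
        obtain ⟨i, hi, ⟨u, hu⟩, ⟨w, hw⟩⟩ := hxw _ (hocc g hg)
        obtain ⟨⟨a, ha⟩, -⟩ := hbd (φ u)
        obtain ⟨-, ⟨b, hb⟩⟩ := hbd (φ w)
        exact ⟨i, hi, ⟨a, le_trans ha hu⟩, ⟨b, le_trans hw hb⟩⟩
      obtain ⟨n, hn⟩ := List.mem_iff_get.1 hxB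
      refine ⟨⟨nbase B + n.1, mem_clN_nodes.2 (Or.inr ⟨n.1, n.2, rfl⟩)⟩, ?_⟩
      show (clN s ρ B).lab _ = x
      rw [clN_lab_new n.2, ← hn]

lemma derEdge_iff {G : Episode α} {e : ℕ × ℕ} : DerivableEdge s ρ G e ↔
    IsProperSkeletonEdge G e ∧ Subep G (icl s ρ (G.eraseEdge e)) := Iff.rfl

lemma derNode_iff {G : Episode α} {v : ℕ} : DerivableNode s ρ G v ↔
    Solitary G v ∧ Subep G (icl s ρ (G.eraseNode v)) := Iff.rfl

lemma pse_iff {G : Episode α} {e : ℕ × ℕ} : IsProperSkeletonEdge G e ↔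
    (G.edge e.1 e.2 ∧ ¬ ∃ u, G.edge e.1 u ∧ G.edge u e.2) ∧
      G.lab e.1 ≠ G.lab e.2 := Iff.rfl

lemma sol_iff {G : Episode α} {v : ℕ} : Solitary G v ↔
    v ∈ G.nodes ∧ ∀ u, ¬ G.edge u v ∧ ¬ G.edge v u := Iff.rfl

lemma Sub.eraseEdge (G : Episode α) (e : ℕ × ℕ) : Sub (G.eraseEdge e) G :=
  ⟨Finset.Subset.refl _, fun _ _ h => h.1, rfl⟩

lemma Sub.eraseNode (G : Episode α) (w : ℕ) : Sub (G.eraseNode w) G :=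
  ⟨Finset.erase_subset _ _, fun _ _ h => h.1, rfl⟩

lemma transGen_sub {G' G : Episode α} (hs : Sub G' G) {u v : ℕ}
    (h : Relation.TransGen G'.edge u v) : Relation.TransGen G.edge u v := by
  induction h with
  | single h => exact Relation.TransGen.single (hs.2.1 h)
  | tail _ h2 ih => exact ih.tail (hs.2.1 h2)

lemma inS_eraseEdge {G : Episode α} (hG : inS G) {e : ℕ × ℕ}
    (he : IsProperSkeletonEdge G e) : inS (G.eraseEdge e) := by
  obtain ⟨hac, htc, hst⟩ := hG
  obtain ⟨⟨hee, hsk⟩, hlab⟩ := pse_iff.1 he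
  refine ⟨?_, ?_, ?_⟩
  · intro v hv
    exact hac v (transGen_sub (Sub.eraseEdge G e) hv)
  · intro u v h
    induction h with
    | single h => exact h
    | tail h1 h2 ih =>
      refine ⟨htc (Relation.TransGen.tail (Relation.TransGen.single ih.1) h2.1), ?_⟩
      intro hpair
      rw [← hpair] at hsk
      exact hsk ⟨_, ih.1, h2.1⟩
  · intro u hu v hv hne hlab'
    have hu' : u ∈ G.nodes := hu
    have hv' : v ∈ G.nodes := hv
    have h1 : G.edge u v ∨ G.edge v u := by
      rcases hst u hu' v hv' hne hlab' with h | h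
      · exact Or.inl (htc h)
      · exact Or.inr (htc h)
    rcases h1 with h | h
    · refine Or.inl (Relation.TransGen.single ⟨h, ?_⟩)
      intro hpair
      rw [← hpair] at hlab
      exact hlab hlab'
    · refine Or.inr (Relation.TransGen.single ⟨h, ?_⟩)
      intro hpair
      rw [← hpair] at hlab
      exact hlab hlab'.symm

lemma inS_eraseNode {G : Episode α} (hG : inS G) {w : ℕ}
    (hw : Solitary G w) : inS (G.eraseNode w) := by
  obtain ⟨hac, htc, hst⟩ := hG
  obtain ⟨hwm, hwe⟩ := sol_iff.1 hw
  refine ⟨?_, ?_, ?_⟩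
  · intro v hv
    exact hac v (transGen_sub (Sub.eraseNode G w) hv)
  · intro u v h
    induction h with
    | single h => exact h
    | tail h1 h2 ih =>
      exact ⟨htc (Relation.TransGen.tail (Relation.TransGen.single ih.1) h2.1),
        ih.2.1, h2.2.2⟩
  · intro u hu v hv hne hlab'
    obtain ⟨hu1, hu2⟩ := Finset.mem_erase.1 hu
    obtain ⟨hv1, hv2⟩ := Finset.mem_erase.1 hv
    have h1 : G.edge u v ∨ G.edge v u := by
      rcases hst u hu2 v hv2 hne hlab' with h | h
      · exact Or.inl (htc h)
      · exact Or.inr (htc h)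
    rcases h1 with h | h
    · exact Or.inl (Relation.TransGen.single ⟨h, hu1, hv1⟩)
    · exact Or.inr (Relation.TransGen.single ⟨h, hv1, hu1⟩)

/-- A subgraph (with the same labelling) is a subepisode. -/
lemma Sub.subep {F H : Episode α} (hs : Sub F H) : Subep F H := by
  refine ⟨F.nodes, hs.1, rfl, ?_⟩
  rintro t ⟨g, hgi, hgl, hge⟩
  refine ⟨g, hgi, ?_, ?_⟩
  · intro v
    rw [hgl v]
    show H.lab v.1 = F.lab v.1
    rw [hs.2.2]
  · intro u v h
    exact hge u v ⟨(F.edge_mem h).1, (F.edge_mem h).2, hs.2.1 h⟩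

/-- The measure used in the induction. -/
noncomputable def msr (G : Episode α) : ℕ :=
  G.nodes.card + ((G.nodes ×ˢ G.nodes).filter (fun p => G.edge p.1 p.2)).card

lemma msr_eraseEdge {G : Episode α} {e : ℕ × ℕ} (he : G.edge e.1 e.2) :
    msr (G.eraseEdge e) < msr G := by
  have h1 : (G.eraseEdge e).nodes.card = G.nodes.card := rfl
  apply Nat.add_lt_add_of_le_of_lt (le_of_eq h1)
  apply Finset.card_lt_card
  constructor
  · intro p hp
    rw [Finset.mem_filter] at hp ⊢
    exact ⟨hp.1, hp.2.1⟩
  · intro hsub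
    have h2 : e ∈ (G.nodes ×ˢ G.nodes).filter (fun p => G.edge p.1 p.2) := by
      rw [Finset.mem_filter, Finset.mem_product]
      exact ⟨⟨(G.edge_mem he).1, (G.edge_mem he).2⟩, he⟩
    have h3 := hsub h2
    rw [Finset.mem_filter] at h3
    exact h3.2.2 rfl
  
lemma msr_eraseNode {G : Episode α} {w : ℕ} (hw : w ∈ G.nodes) :
    msr (G.eraseNode w) < msr G := by
  apply Nat.add_lt_add_of_lt_of_le
  · exact Finset.card_erase_lt_of_mem hw
  · apply Finset.card_le_card
    intro p hp
    rw [Finset.mem_filter, Finset.mem_product] at hp ⊢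
    exact ⟨⟨Finset.mem_of_mem_erase hp.1.1, Finset.mem_of_mem_erase hp.1.2⟩,
      hp.2.1⟩

lemma aux_main (s : List α) (ρ : ℕ) : ∀ (n : ℕ) (G : Episode α), msr G ≤ n →
    inS G → Occurs s ρ G →
    ∃ F : Episode α, Relation.ReflTransGen (RemStep s ρ) G F ∧
      inS F ∧ Sub F G ∧
      (∀ e, ¬ DerivableEdge s ρ F e) ∧
      (∀ v, ¬ DerivableNode s ρ F v) ∧
      Emb G (icl s ρ F) ∧
      (∀ e, IsProperSkeletonEdge G e →
        ¬ Subep G (icl s ρ (G.eraseEdge e)) → F.edge e.1 e.2) ∧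
      (∀ v, Solitary G v →
        ¬ Subep G (icl s ρ (G.eraseNode v)) → v ∈ F.nodes) := by
  intro n
  induction n using Nat.strong_induction_on with
  | _ n ih =>
    intro G hμ hG hocc
    by_cases hder : (∃ e, DerivableEdge s ρ G e) ∨ ∃ v, DerivableNode s ρ G v
    · rcases hder with ⟨e, hde⟩ | ⟨w, hdw⟩
      · -- remove a derivable edge
        obtain ⟨hPSE, hsubd⟩ := derEdge_iff.1 hde
        have hedge : G.edge e.1 e.2 := hPSE.1.1
        have hsub1 : Sub (G.eraseEdge e) G := Sub.eraseEdge G e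
        have hG₁ : inS (G.eraseEdge e) := inS_eraseEdge hG hPSE
        have hocc₁ : Occurs s ρ (G.eraseEdge e) := hocc.ofSub hsub1
        obtain ⟨F, hchain, hF, hFsub, hnoe, hnon, hemb, h7, h8⟩ :=
          ih (msr (G.eraseEdge e)) (lt_of_lt_of_le (msr_eraseEdge hedge) hμ)
            (G.eraseEdge e) (le_refl _) hG₁ hocc₁
        have δ : Emb G (icl s ρ (G.eraseEdge e)) :=
          hsubd.emb hG (inS_icl hG₁ hocc₁)
        refine ⟨F, ?_, hF, hFsub.trans hsub1, hnoe, hnon, ?_, ?_, ?_⟩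
        · exact Relation.ReflTransGen.head
            (show RemStep s ρ G (G.eraseEdge e) from Or.inl ⟨e, hde, rfl⟩) hchain
        · exact δ.trans (iclext_emb hemb)
        · intro e' he' hnsub
          have hne' : e' ≠ e := by
            rintro rfl
            exact hnsub hsubd
          have hPSE' : IsProperSkeletonEdge (G.eraseEdge e) e' := by
            obtain ⟨⟨he1, he2⟩, he3⟩ := pse_iff.1 he'
            refine pse_iff.2 ⟨⟨⟨he1, hne'⟩, ?_⟩, he3⟩
            rintro ⟨u, h1, h2⟩
            exact he2 ⟨u, h1.1, h2.1⟩
          have hnsub₁ : ¬ Subep (G.eraseEdge e) (icl s ρ ((G.eraseEdge e).eraseEdge e')) := by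
            intro hsub
            apply hnsub
            have h1 : Emb (G.eraseEdge e) (icl s ρ ((G.eraseEdge e).eraseEdge e')) :=
              hsub.emb hG₁ (inS_icl (inS_eraseEdge hG₁ hPSE')
                (hocc₁.ofSub (Sub.eraseEdge _ e')))
            have h2 := iclext_emb h1
            have h3 : Sub ((G.eraseEdge e).eraseEdge e') (G.eraseEdge e') :=
              ⟨Finset.Subset.refl _, fun x y h => ⟨h.1.1, h.2⟩, rfl⟩
            exact ((δ.trans h2).trans (mono_emb h3)).subep
          exact h7 e' hPSE' hnsub₁
        · intro v hv hnsub
          obtain ⟨hv1, hv2⟩ := sol_iff.1 hv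
          have hv₁ : Solitary (G.eraseEdge e) v := sol_iff.2
            ⟨hv1, fun u => ⟨fun h => (hv2 u).1 h.1, fun h => (hv2 u).2 h.1⟩⟩
          have hnsub₁ : ¬ Subep (G.eraseEdge e) (icl s ρ ((G.eraseEdge e).eraseNode v)) := by
            intro hsub
            apply hnsub
            have h1 : Emb (G.eraseEdge e) (icl s ρ ((G.eraseEdge e).eraseNode v)) :=
              hsub.emb hG₁ (inS_icl (inS_eraseNode hG₁ hv₁)
                (hocc₁.ofSub (Sub.eraseNode _ v)))
            have h2 := iclext_emb h1
            have h3 : Sub ((G.eraseEdge e).eraseNode v) (G.eraseNode v) :=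
              ⟨Finset.Subset.refl _, fun x y h => ⟨h.1.1, h.2.1, h.2.2⟩, rfl⟩
            exact ((δ.trans h2).trans (mono_emb h3)).subep
          exact h8 v hv₁ hnsub₁
      · -- remove a derivable solitary node
        obtain ⟨hSol, hsubd⟩ := derNode_iff.1 hdw
        obtain ⟨hwm, hwe⟩ := sol_iff.1 hSol
        have hsub1 : Sub (G.eraseNode w) G := Sub.eraseNode G w
        have hG₁ : inS (G.eraseNode w) := inS_eraseNode hG hSol
        have hocc₁ : Occurs s ρ (G.eraseNode w) := hocc.ofSub hsub1
        obtain ⟨F, hchain, hF, hFsub, hnoe, hnon, hemb, h7, h8⟩ :=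
          ih (msr (G.eraseNode w)) (lt_of_lt_of_le (msr_eraseNode hwm) hμ)
            (G.eraseNode w) (le_refl _) hG₁ hocc₁
        have δ : Emb G (icl s ρ (G.eraseNode w)) :=
          hsubd.emb hG (inS_icl hG₁ hocc₁)
        refine ⟨F, ?_, hF, hFsub.trans hsub1, hnoe, hnon, ?_, ?_, ?_⟩
        · exact Relation.ReflTransGen.head
            (show RemStep s ρ G (G.eraseNode w) from Or.inr ⟨w, hdw, rfl⟩) hchain
        · exact δ.trans (iclext_emb hemb)
        · intro e' he' hnsub
          obtain ⟨⟨he1, he2⟩, he3⟩ := pse_iff.1 he'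
          have hne1 : e'.1 ≠ w := fun h => (hwe e'.2).2 (h ▸ he1)
          have hne2 : e'.2 ≠ w := fun h => (hwe e'.1).1 (h ▸ he1)
          have hPSE' : IsProperSkeletonEdge (G.eraseNode w) e' := by
            refine pse_iff.2 ⟨⟨⟨he1, hne1, hne2⟩, ?_⟩, he3⟩
            rintro ⟨u, h1, h2⟩
            exact he2 ⟨u, h1.1, h2.1⟩
          have hnsub₁ : ¬ Subep (G.eraseNode w) (icl s ρ ((G.eraseNode w).eraseEdge e')) := by
            intro hsub
            apply hnsub
            have h1 : Emb (G.eraseNode w) (icl s ρ ((G.eraseNode w).eraseEdge e')) :=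
              hsub.emb hG₁ (inS_icl (inS_eraseEdge hG₁ hPSE')
                (hocc₁.ofSub (Sub.eraseEdge _ e')))
            have h2 := iclext_emb h1
            have h3 : Sub ((G.eraseNode w).eraseEdge e') (G.eraseEdge e') :=
              ⟨Finset.erase_subset _ _, fun x y h => ⟨h.1.1, h.2⟩, rfl⟩
            exact ((δ.trans h2).trans (mono_emb h3)).subep
          exact h7 e' hPSE' hnsub₁
        · intro v hv hnsub
          obtain ⟨hv1, hv2⟩ := sol_iff.1 hv
          have hvw : v ≠ w := by
            rintro rfl
            exact hnsub hsubd
          have hv₁ : Solitary (G.eraseNode w) v := sol_iff.2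
            ⟨Finset.mem_erase.2 ⟨hvw, hv1⟩,
              fun u => ⟨fun h => (hv2 u).1 h.1, fun h => (hv2 u).2 h.1⟩⟩
          have hnsub₁ : ¬ Subep (G.eraseNode w) (icl s ρ ((G.eraseNode w).eraseNode v)) := by
            intro hsub
            apply hnsub
            have h1 : Emb (G.eraseNode w) (icl s ρ ((G.eraseNode w).eraseNode v)) :=
              hsub.emb hG₁ (inS_icl (inS_eraseNode hG₁ hv₁)
                (hocc₁.ofSub (Sub.eraseNode _ v)))
            have h2 := iclext_emb h1
            have h3 : Sub ((G.eraseNode w).eraseNode v) (G.eraseNode v) :=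
              ⟨Finset.erase_subset_erase _ (Finset.erase_subset _ _),
                fun x y h => ⟨h.1.1, h.2.1, h.2.2⟩, rfl⟩
            exact ((δ.trans h2).trans (mono_emb h3)).subep
          exact h8 v hv₁ hnsub₁
    · push_neg at hder
      refine ⟨G, Relation.ReflTransGen.refl, hG, Sub.refl G, ?_, ?_,
        emb_icl G, ?_, ?_⟩
      · exact hder.1
      · exact hder.2
      · intro e he _
        exact (pse_iff.1 he).1.1
      · intro v hv _
        exact (sol_iff.1 hv).1

end Thm19

end Episode
open Episode in
/-- For every `H ∈ 𝒮` occurring in `s` within a window of length at most `ρ`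
there is an episode `F ∈ 𝒮`, `F ⪯ H`, obtained from `H` by repeatedly removing
derivable proper skeleton edges and derivable solitary nodes, such that `F`
has no derivable proper skeleton edges and no derivable solitary nodes,
`H ⪯ icl(F)`, every non-derivable proper skeleton edge of `H` remains an edge
of `F`, and every non-derivable solitary node of `H` remains a node of `F`. -/
theorem stmt19 {α : Type*} [LinearOrder α] (s : List α) (ρ : ℕ)
    (H : Episode α) (hH : inS H) (hocc : Occurs s ρ H) :
    ∃ F : Episode α, Relation.ReflTransGen (RemStep s ρ) H F ∧
      inS F ∧ Subep F H ∧
      (∀ e, ¬ DerivableEdge s ρ F e) ∧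
      (∀ v, ¬ DerivableNode s ρ F v) ∧
      Subep H (icl s ρ F) ∧
      (∀ e, IsProperSkeletonEdge H e →
        ¬ Subep H (icl s ρ (H.eraseEdge e)) → F.edge e.1 e.2) ∧
      ∀ v, Solitary H v →
        ¬ Subep H (icl s ρ (H.eraseNode v)) → v ∈ F.nodes := by
  obtain ⟨F, hchain, hF, hFsub, hnoe, hnon, hemb, h7, h8⟩ :=
    aux_main s ρ (msr H) H (le_refl _) hH hocc
  exact ⟨F, hchain, hF, hFsub.subep, hnoe, hnon, hemb.subep, h7, h8⟩
end
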